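/- arXiv:math/0607799 — 2 statements merged into one kernel-verified Lean document; each statement's English description precedes it below -/
import Mathlib

section
/- Under Assumption 1, the time-varying Volterra series X_{t,N}² = a_0(t/N) Z_t² + Σ_{k≥1} Σ_{j_k<⋯<j_1<j_0=t} g_{t,N}(k, j_0,…,j_k) Π_{i=0}^k Z_{j_i}², where g_{t,N}(k, j_0,…,j_k) = a_0(j_k/N) Π_{i=1}^k a_{(j_{i−1}−j_i)}(j_{i−1}/N), converges almost surely for every t and N, satisfies E(X_{t,N}²) ≤ sup_u a_0(u)·[1 + Σ_{k=1}^∞ (1−ν)^k] < ∞ uniformly in t and N, is a causal solution of the tvARCH(∞) equations, and is almost surely the unique causal solution among all causal solutions Y_{t,N}² with sup_{t,N} E(Y_{t,N}²) < ∞. -/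
open MeasureTheory ProbabilityTheory Filter Set
open scoped ENNReal NNReal Topology

noncomputable section

/-- `volIdx t d i` is the index `j_i = t - (d 0 + ⋯ + d (i-1))` determined by the gaps `d`. -/
def volIdx (t : ℤ) {k : ℕ} (d : Fin k → ℕ+) (i : ℕ) : ℤ :=
  t - ∑ s ∈ Finset.univ.filter (fun s : Fin k => (s : ℕ) < i), ((d s : ℕ) : ℤ)

/-- time-varying Volterra coefficient `g_{t,N}(k, j_0,…,j_k)` written in terms of the gaps. -/
def volCoef (a : ℕ → ℝ → ℝ) (N : ℕ) (t : ℤ) {k : ℕ} (d : Fin k → ℕ+) : ℝ :=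
  a 0 (((volIdx t d k : ℤ) : ℝ) / N) *
    ∏ i : Fin k, a (d i : ℕ) (((volIdx t d (i : ℕ) : ℤ) : ℝ) / N)

/-- stationary Volterra coefficient `g̃_u(k, j_0,…,j_k)`. -/
def volCoefStat (a : ℕ → ℝ → ℝ) (u : ℝ) {k : ℕ} (d : Fin k → ℕ+) : ℝ :=
  a 0 u * ∏ i : Fin k, a (d i : ℕ) u

/-- the product `Π_{i=0}^k Z_{j_i}^2`. -/
def volZprod {Ω : Type*} (Z : ℤ → Ω → ℝ) (t : ℤ) {k : ℕ} (d : Fin k → ℕ+) (ω : Ω) : ℝ :=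
  ∏ i ∈ Finset.range (k + 1), (Z (volIdx t d i) ω) ^ 2

/-- the time-varying Volterra series for `X_{t,N}²`. -/
def volX2 {Ω : Type*} (a : ℕ → ℝ → ℝ) (Z : ℤ → Ω → ℝ) (N : ℕ) (t : ℤ) (ω : Ω) : ℝ :=
  a 0 ((t : ℝ) / N) * (Z t ω) ^ 2 +
    ∑' k : ℕ, ∑' d : Fin (k + 1) → ℕ+, volCoef a N t d * volZprod Z t d ω

/-- the stationary Volterra series for `X̃_t(u)²`. -/
def volX2stat {Ω : Type*} (a : ℕ → ℝ → ℝ) (Z : ℤ → Ω → ℝ) (u : ℝ) (t : ℤ) (ω : Ω) : ℝ :=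
  a 0 u * (Z t ω) ^ 2 +
    ∑' k : ℕ, ∑' d : Fin (k + 1) → ℕ+, volCoefStat a u d * volZprod Z t d ω

/-- the process `U_t`. -/
def volU {Ω : Type*} (Q : ℝ) (ℓ : ℕ → ℝ) (Z : ℤ → Ω → ℝ) (t : ℤ) (ω : Ω) : ℝ :=
  (Z t ω) ^ 2 + ∑' k : ℕ, ∑' d : Fin (k + 1) → ℕ+,
    Q ^ k * (((k : ℝ) + 1) * (∑ i, ((d i : ℕ) : ℝ)) / ∏ i, ℓ (d i : ℕ)) * volZprod Z t d ω

/-- Assumption 1 of Dahlhaus–Subba Rao (2006). -/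
structure Assumption1 (a : ℕ → ℝ → ℝ) (ρ Q M ν : ℝ) (ℓ : ℕ → ℝ) : Prop where
  ρ_pos : 0 < ρ
  Q_pos : 0 < Q
  M_pos : 0 < M
  ν_pos : 0 < ν
  ν_lt_one : ν < 1
  ℓ_pos : ∀ j : ℕ, 1 ≤ j → 0 < ℓ j
  a_nonneg : ∀ j u, 0 ≤ a j u
  a_causal : ∀ (j : ℕ) (u : ℝ), u < 0 → a j u = 0
  a0_lower : ∀ u : ℝ, 0 ≤ u → ρ < a 0 u
  a_upper : ∀ j : ℕ, 1 ≤ j → ∀ u, a j u ≤ Q / ℓ j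
  summable_inv : Summable fun j : ℕ+ => 1 / ℓ j
  sum_bound : Q * (∑' j : ℕ+, 1 / ℓ j) ≤ 1 - ν
  lipschitz : ∀ j : ℕ, 1 ≤ j → ∀ u v : ℝ, 0 ≤ u → 0 ≤ v →
    |a j u - a j v| ≤ M * |u - v| / ℓ j
  lipschitz0 : ∀ u v : ℝ, 0 ≤ u → 0 ≤ v → |a 0 u - a 0 v| ≤ M * |u - v|
  summable_jdiv : Summable fun j : ℕ+ => ((j : ℕ) : ℝ) / ℓ j

/-- i.i.d. innovations with mean zero and unit variance. -/
structure IIDNoise {Ω : Type*} [MeasureSpace Ω] (Z : ℤ → Ω → ℝ) : Prop where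
  meas : ∀ t, Measurable (Z t)
  indep : iIndepFun Z ℙ
  ident : ∀ t : ℤ, IdentDistrib (Z t) (Z 0) ℙ ℙ
  integrable : Integrable (Z 0) ℙ
  sq_integrable : Integrable (fun ω => (Z 0 ω) ^ 2) ℙ
  mean_zero : ∫ ω, Z 0 ω ∂ℙ = 0
  var_one : ∫ ω, (Z 0 ω) ^ 2 ∂ℙ = 1

/-- the compact parameter set Ω of Assumption 2(iii). -/
def OmegaSet (p : ℕ) (ρ₁ ρ₂ : ℝ) : Set (Fin (p + 1) → ℝ) :=
  {α | (∑ i ∈ Finset.univ.erase (0 : Fin (p + 1)), α i) ≤ 1 ∧ ρ₁ ≤ α 0 ∧ α 0 ≤ ρ₂ ∧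
      ∀ i : Fin (p + 1), i ≠ 0 → ρ₁ ≤ α i}

/-- the vector `a_u = (a_0(u),…,a_p(u))`. -/
def aVec (a : ℕ → ℝ → ℝ) (p : ℕ) (u : ℝ) : Fin (p + 1) → ℝ := fun i => a i u

/-- Assumption 2(iii). -/
structure Assumption2iii (a : ℕ → ℝ → ℝ) (p : ℕ) (ρ₁ ρ₂ : ℝ) : Prop where
  ρ₁_pos : 0 < ρ₁
  ρ₁_le_ρ₂ : ρ₁ ≤ ρ₂
  mem_int : ∀ u ∈ Set.Ioc (0 : ℝ) 1, aVec a p u ∈ interior (OmegaSet p ρ₁ ρ₂)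

/-- `w_{k,N}(α)` resp. `w̃_k(u₀,α)`, built from a given squared process. -/
def wLik {Ω : Type*} (p : ℕ) (α : Fin (p + 1) → ℝ) (X2 : ℤ → Ω → ℝ) (k : ℤ) (ω : Ω) : ℝ :=
  α 0 + ∑ i ∈ Finset.univ.erase (0 : Fin (p + 1)), α i * X2 (k - (i : ℕ)) ω

/-- `∇w_k(α)_i` (gradient of `wLik` in α). -/
def gradw {Ω : Type*} (p : ℕ) (X2 : ℤ → Ω → ℝ) (k : ℤ) (i : Fin (p + 1)) (ω : Ω) : ℝ :=
  if i = 0 then 1 else X2 (k - (i : ℕ)) ω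

/-- the quasi-likelihood summand `ℓ_{k}(α) = ½(log w + X²/w)`. -/
def likTerm {Ω : Type*} (p : ℕ) (α : Fin (p + 1) → ℝ) (X2 : ℤ → Ω → ℝ) (k : ℤ) (ω : Ω) : ℝ :=
  (Real.log (wLik p α X2 k ω) + X2 k ω / wLik p α X2 k ω) / 2

/-- `∇ℓ_k(α)_i`. -/
def gradLikTerm {Ω : Type*} (p : ℕ) (α : Fin (p + 1) → ℝ) (X2 : ℤ → Ω → ℝ) (k : ℤ)
    (i : Fin (p + 1)) (ω : Ω) : ℝ :=
  (gradw p X2 k i ω / wLik p α X2 k ω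
    - X2 k ω * gradw p X2 k i ω / (wLik p α X2 k ω) ^ 2) / 2

/-- `∇²ℓ_k(α)_{ij}`. -/
def hessLikTerm {Ω : Type*} (p : ℕ) (α : Fin (p + 1) → ℝ) (X2 : ℤ → Ω → ℝ) (k : ℤ)
    (i j : Fin (p + 1)) (ω : Ω) : ℝ :=
  (-(gradw p X2 k i ω * gradw p X2 k j ω) / (wLik p α X2 k ω) ^ 2
    + 2 * X2 k ω * gradw p X2 k i ω * gradw p X2 k j ω / (wLik p α X2 k ω) ^ 3) / 2

/-- localized kernel sum `Σ_{k=p+1}^N (1/(bN)) W((t₀−k)/(bN)) f_k`. -/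
def kernSum {Ω : Type*} (W : ℝ → ℝ) (b : ℝ) (N : ℕ) (t₀ : ℕ) (p : ℕ)
    (f : ℤ → Ω → ℝ) (ω : Ω) : ℝ :=
  ∑ k ∈ Finset.Icc (p + 1) N, (1 / (b * N)) * W (((t₀ : ℝ) - k) / (b * N)) * f k ω

/-- the shift on two-sided real sequences. -/
def seqShift : (ℤ → ℝ) → (ℤ → ℝ) := fun x t => x (t + 1)

section AuxIdx

lemma volIdx_zero (t : ℤ) {k : ℕ} (d : Fin k → ℕ+) : volIdx t d 0 = t := by
  simp [volIdx]

lemma volIdx_le (t : ℤ) {k : ℕ} (d : Fin k → ℕ+) (i : ℕ) : volIdx t d i ≤ t := by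
  have : (0:ℤ) ≤ ∑ s ∈ Finset.univ.filter (fun s : Fin k => (s : ℕ) < i), ((d s : ℕ) : ℤ) :=
    Finset.sum_nonneg fun s _ => by positivity
  simp only [volIdx]
  omega

lemma volIdx_cons (t : ℤ) (j : ℕ+) {k : ℕ} (d : Fin k → ℕ+) (i : ℕ) :
    volIdx t (Fin.cons j d) (i + 1) = volIdx (t - ((j : ℕ) : ℤ)) d i := by
  unfold volIdx
  rw [Finset.sum_filter, Finset.sum_filter, Fin.sum_univ_succ]
  simp only [Fin.cons_zero, Fin.cons_succ, Fin.val_zero, Fin.val_succ,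
    Nat.zero_lt_succ, if_true, Nat.succ_lt_succ_iff]
  ring

lemma volZprod_cons {Ω : Type*} (Z : ℤ → Ω → ℝ) (t : ℤ) (j : ℕ+) {k : ℕ} (d : Fin k → ℕ+)
    (ω : Ω) :
    volZprod Z t (Fin.cons j d) ω = (Z t ω) ^ 2 * volZprod Z (t - ((j : ℕ) : ℤ)) d ω := by
  unfold volZprod
  rw [Finset.prod_range_succ']
  simp only [volIdx_cons, volIdx_zero]
  ring

lemma volCoef_cons (a : ℕ → ℝ → ℝ) (N : ℕ) (t : ℤ) (j : ℕ+) {k : ℕ} (d : Fin k → ℕ+) :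
    volCoef a N t (Fin.cons j d) =
      a (j : ℕ) ((t : ℝ) / N) * volCoef a N (t - ((j : ℕ) : ℤ)) d := by
  unfold volCoef
  rw [Fin.prod_univ_succ]
  simp only [Fin.cons_zero, Fin.cons_succ, Fin.val_zero, Fin.val_succ, volIdx_zero]
  have h1 : ∀ i : ℕ, volIdx t (Fin.cons j d) (i + 1) = volIdx (t - ((j : ℕ) : ℤ)) d i :=
    volIdx_cons t j d
  rw [h1 k]
  have : ∀ i : Fin k, volIdx t (Fin.cons j d) ((i : ℕ) + 1) = volIdx (t - ((j : ℕ) : ℤ)) d i :=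
    fun i => h1 i
  simp only [this]
  ring

lemma volZprod_nonneg {Ω : Type*} (Z : ℤ → Ω → ℝ) (t : ℤ) {k : ℕ} (d : Fin k → ℕ+) (ω : Ω) :
    0 ≤ volZprod Z t d ω :=
  Finset.prod_nonneg fun _ _ => sq_nonneg _

lemma volZprod_zero {Ω : Type*} (Z : ℤ → Ω → ℝ) (t : ℤ) (d : Fin 0 → ℕ+) (ω : Ω) :
    volZprod Z t d ω = (Z t ω) ^ 2 := by
  simp [volZprod, volIdx_zero]

lemma volCoef_zero (a : ℕ → ℝ → ℝ) (N : ℕ) (t : ℤ) (d : Fin 0 → ℕ+) :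
    volCoef a N t d = a 0 ((t : ℝ) / N) := by
  simp [volCoef, volIdx_zero]

end AuxIdx
section AuxTsum

lemma tsum_eq_toReal_tsum_ofReal {ι : Type*} {f : ι → ℝ} (hf : ∀ i, 0 ≤ f i) :
    ∑' i, f i = (∑' i, ENNReal.ofReal (f i)).toReal := by
  by_cases h : Summable f
  · rw [← ENNReal.ofReal_tsum_of_nonneg hf h, ENNReal.toReal_ofReal (tsum_nonneg hf)]
  · rw [tsum_eq_zero_of_not_summable h]
    have h2 : ∑' i, ENNReal.ofReal (f i) = ∞ := by
      by_contra hne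
      exact h (((ENNReal.summable_toReal hne).congr) fun i => ENNReal.toReal_ofReal (hf i))
    simp [h2]

lemma summable_of_tsum_ofReal_ne_top {ι : Type*} {f : ι → ℝ} (hf : ∀ i, 0 ≤ f i)
    (h : ∑' i, ENNReal.ofReal (f i) ≠ ∞) : Summable f :=
  ((ENNReal.summable_toReal h).congr) fun i => ENNReal.toReal_ofReal (hf i)

/-- tsum of a product over tuples factorises, in `ℝ≥0∞`. -/
lemma tsum_pi_prod (f : ℕ+ → ℝ≥0∞) :
    ∀ n : ℕ, ∑' d : Fin n → ℕ+, ∏ i, f (d i) = (∑' j : ℕ+, f j) ^ n := by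
  intro n
  induction n with
  | zero =>
    rw [tsum_eq_single (fun i => i.elim0) (fun b hb => absurd (funext fun i => i.elim0) hb)]
    simp
  | succ n ih =>
    rw [← (Fin.consEquiv (fun _ : Fin (n+1) => ℕ+)).tsum_eq
      (f := fun d : Fin (n+1) → ℕ+ => ∏ i, f (d i))]
    rw [ENNReal.tsum_prod']
    have : ∀ (j : ℕ+) (d : Fin n → ℕ+),
        (∏ i : Fin (n+1), f ((Fin.consEquiv (fun _ : Fin (n+1) => ℕ+)) (j, d) i))
          = f j * ∏ i : Fin n, f (d i) := by
      intro j d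
      rw [Fin.prod_univ_succ]
      simp [Fin.consEquiv]
    simp only [this]
    rw [pow_succ']
    rw [← ih]
    rw [← ENNReal.tsum_mul_right]
    congr 1
    funext j
    rw [ENNReal.tsum_mul_left]

end AuxTsum
section AuxMle

variable {Ωs : Type*} [MeasureSpace Ωs]

/-- the σ-algebra of the past up to time `t`. -/
def Mle (Z : ℤ → Ωs → ℝ) (t : ℤ) : MeasurableSpace Ωs :=
  ⨆ s : {s : ℤ // s ≤ t}, MeasurableSpace.comap (Z (s : ℤ)) inferInstance

lemma measurable_Mle_Z (Z : ℤ → Ωs → ℝ) {s t : ℤ} (h : s ≤ t) : Measurable[Mle Z t] (Z s) :=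
  measurable_iff_comap_le.mpr
    (le_iSup (fun r : {s : ℤ // s ≤ t} => MeasurableSpace.comap (Z (r : ℤ)) inferInstance) ⟨s, h⟩)

lemma Mle_mono (Z : ℤ → Ωs → ℝ) {s t : ℤ} (h : s ≤ t) : Mle Z s ≤ Mle Z t :=
  iSup_le fun r =>
    le_iSup (fun r : {s : ℤ // s ≤ t} => MeasurableSpace.comap (Z (r : ℤ)) inferInstance)
      ⟨(r : ℤ), r.2.trans h⟩

lemma Mle_le_ambient {Z : ℤ → Ωs → ℝ} (hZ : ∀ t, Measurable (Z t)) (t : ℤ) :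
    Mle Z t ≤ (inferInstance : MeasurableSpace Ωs) :=
  iSup_le fun r => measurable_iff_comap_le.mp (hZ (r : ℤ))

lemma measurable_Mle_volZprod (Z : ℤ → Ωs → ℝ) (t : ℤ) {k : ℕ} (d : Fin k → ℕ+) :
    Measurable[Mle Z t] (volZprod Z t d) := by
  unfold volZprod
  exact Finset.measurable_prod _ fun i _ =>
    (measurable_Mle_Z Z (volIdx_le t d i)).pow_const 2

lemma indep_Mle [IsProbabilityMeasure (ℙ : Measure Ωs)] {Z : ℤ → Ωs → ℝ} (hZ : IIDNoise Z)
    {t' t : ℤ} (h : t' < t) :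
    Indep (Mle Z t') (MeasurableSpace.comap (Z t) inferInstance) ℙ := by
  have h_indep : iIndep (fun i : ℤ => MeasurableSpace.comap (Z i) inferInstance) ℙ :=
    hZ.indep.iIndep
  have hd : Disjoint {s : ℤ | s ≤ t'} {t} := by
    simp only [Set.disjoint_singleton_right, Set.mem_setOf_eq, not_le]
    exact h
  have H := indep_iSup_of_disjoint (fun i => measurable_iff_comap_le.mp (hZ.meas i)) h_indep hd
  have h1 : (⨆ i ∈ {s : ℤ | s ≤ t'}, MeasurableSpace.comap (Z i) inferInstance) = Mle Z t' := by
    rw [Mle, iSup_subtype']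
    rfl
  have h2 : (⨆ i ∈ ({t} : Set ℤ), MeasurableSpace.comap (Z i) inferInstance) =
      MeasurableSpace.comap (Z t) inferInstance := by
    simp
  rwa [h1, h2] at H

lemma indepFun_of_Mle [IsProbabilityMeasure (ℙ : Measure Ωs)] {Z : ℤ → Ωs → ℝ}
    (hZ : IIDNoise Z) {t' t : ℤ} (h : t' < t) {γ : Type*} [MeasurableSpace γ]
    {f : Ωs → γ} {g : Ωs → γ}
    (hf : Measurable[Mle Z t'] f)
    (hg : Measurable[MeasurableSpace.comap (Z t) inferInstance] g) :
    IndepFun f g ℙ := by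
  have H := indep_Mle hZ h
  have h1 := indep_of_indep_of_le_left H (measurable_iff_comap_le.mp hf)
  exact indep_of_indep_of_le_right h1 (measurable_iff_comap_le.mp hg)

end AuxMle
set_option linter.unusedSectionVars false

section AuxInt

variable {Ωs : Type*} [MeasureSpace Ωs] [IsProbabilityMeasure (ℙ : Measure Ωs)]
variable {Z : ℤ → Ωs → ℝ}

lemma lintegral_Zsq (hZ : IIDNoise Z) (t : ℤ) :
    ∫⁻ ω, ENNReal.ofReal ((Z t ω) ^ 2) ∂ℙ = 1 := by
  have hid : IdentDistrib (fun ω => ENNReal.ofReal ((Z t ω) ^ 2))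
      (fun ω => ENNReal.ofReal ((Z 0 ω) ^ 2)) ℙ ℙ :=
    (hZ.ident t).comp (ENNReal.measurable_ofReal.comp (measurable_id.pow_const 2))
  rw [hid.lintegral_eq, ← MeasureTheory.ofReal_integral_eq_lintegral_ofReal hZ.sq_integrable
    (Filter.Eventually.of_forall fun ω => sq_nonneg _), hZ.var_one, ENNReal.ofReal_one]

lemma lintegral_volZprod (hZ : IIDNoise Z) :
    ∀ (k : ℕ) (t : ℤ) (d : Fin k → ℕ+),
      ∫⁻ ω, ENNReal.ofReal (volZprod Z t d ω) ∂ℙ = 1 := by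
  intro k
  induction k with
  | zero =>
    intro t d
    simp only [volZprod_zero]
    exact lintegral_Zsq hZ t
  | succ k ih =>
    intro t d
    have hd : d = Fin.cons (d 0) (Fin.tail d) := (Fin.cons_self_tail d).symm
    rw [hd]
    have heq : ∀ ω, ENNReal.ofReal (volZprod Z t (Fin.cons (d 0) (Fin.tail d)) ω)
        = ENNReal.ofReal (volZprod Z (t - ((d 0 : ℕ) : ℤ)) (Fin.tail d) ω)
          * ENNReal.ofReal ((Z t ω) ^ 2) := by
      intro ω
      rw [volZprod_cons, ENNReal.ofReal_mul (sq_nonneg _), mul_comm]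
    simp only [heq]
    have hmf : Measurable (fun ω => ENNReal.ofReal (volZprod Z (t - ((d 0 : ℕ) : ℤ))
        (Fin.tail d) ω)) := by
      exact (((measurable_Mle_volZprod Z _ (Fin.tail d)).mono
        (Mle_le_ambient hZ.meas _) le_rfl)).ennreal_ofReal
    have hmg : Measurable (fun ω => ENNReal.ofReal ((Z t ω) ^ 2)) :=
      ((hZ.meas t).pow_const 2).ennreal_ofReal
    have hlt : t - ((d 0 : ℕ) : ℤ) < t := by
      have : (1 : ℤ) ≤ ((d 0 : ℕ) : ℤ) := by exact_mod_cast (d 0).one_le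
      omega
    have hind : IndepFun (fun ω => ENNReal.ofReal (volZprod Z (t - ((d 0 : ℕ) : ℤ))
        (Fin.tail d) ω)) (fun ω => ENNReal.ofReal ((Z t ω) ^ 2)) ℙ := by
      refine indepFun_of_Mle hZ hlt ?_ ?_
      · exact (measurable_Mle_volZprod Z _ (Fin.tail d)).ennreal_ofReal
      · refine Measurable.ennreal_ofReal (Measurable.pow_const ?_ 2)
        exact measurable_iff_comap_le.mpr le_rfl
    have := lintegral_mul_eq_lintegral_mul_lintegral_of_indepFun hmf hmg hind
    simp only [Pi.mul_apply] at this
    rw [this, ih _ (Fin.tail d), lintegral_Zsq hZ t, one_mul]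

end AuxInt
section AuxV

variable {Ωs : Type*} [MeasureSpace Ωs] [IsProbabilityMeasure (ℙ : Measure Ωs)]

/-- the `ℝ≥0∞`-valued Volterra series. -/
def Vt (a : ℕ → ℝ → ℝ) (Z : ℤ → Ωs → ℝ) (N : ℕ) (t : ℤ) (ω : Ωs) : ℝ≥0∞ :=
  ENNReal.ofReal (a 0 ((t : ℝ) / N)) * ENNReal.ofReal ((Z t ω) ^ 2) +
    ∑' kd : Σ k : ℕ, (Fin (k + 1) → ℕ+),
      ENNReal.ofReal (volCoef a N t kd.2) * ENNReal.ofReal (volZprod Z t kd.2 ω)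

variable {a : ℕ → ℝ → ℝ} {ρ Q M ν : ℝ} {ℓ : ℕ → ℝ} {Z : ℤ → Ωs → ℝ}

lemma volCoef_nonneg (hA1 : Assumption1 a ρ Q M ν ℓ) (N : ℕ) (t : ℤ) {k : ℕ}
    (d : Fin k → ℕ+) : 0 ≤ volCoef a N t d :=
  mul_nonneg (hA1.a_nonneg _ _) (Finset.prod_nonneg fun _ _ => hA1.a_nonneg _ _)

lemma sSup_a0_nonneg (hA1 : Assumption1 a ρ Q M ν ℓ) (hbdd : BddAbove (Set.range (a 0))) :
    0 ≤ sSup (Set.range (a 0)) :=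
  le_trans (hA1.a_nonneg 0 0) (le_csSup hbdd (Set.mem_range_self 0))

lemma a0_le_sSup (hbdd : BddAbove (Set.range (a 0))) (u : ℝ) :
    a 0 u ≤ sSup (Set.range (a 0)) :=
  le_csSup hbdd (Set.mem_range_self u)

lemma a_le_QL (hA1 : Assumption1 a ρ Q M ν ℓ) (j : ℕ+) (u : ℝ) :
    a (j : ℕ) u ≤ Q / ℓ (j : ℕ) := by
  by_cases h : 0 ≤ u
  · exact hA1.a_upper (j : ℕ) j.one_le u
  · rw [hA1.a_causal _ u (not_le.mp h)]
    exact div_nonneg hA1.Q_pos.le (hA1.ℓ_pos _ j.one_le).le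

lemma tsum_QL_le (hA1 : Assumption1 a ρ Q M ν ℓ) :
    ∑' j : ℕ+, ENNReal.ofReal (Q / ℓ (j : ℕ)) ≤ ENNReal.ofReal (1 - ν) := by
  have h1 : ∀ j : ℕ+, ENNReal.ofReal (Q / ℓ (j : ℕ))
      = ENNReal.ofReal Q * ENNReal.ofReal (1 / ℓ (j : ℕ)) := by
    intro j
    rw [← ENNReal.ofReal_mul hA1.Q_pos.le, mul_one_div]
  simp only [h1]
  rw [ENNReal.tsum_mul_left,
    ← ENNReal.ofReal_tsum_of_nonneg (fun j => one_div_nonneg.mpr (hA1.ℓ_pos _ j.one_le).le)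
      hA1.summable_inv,
    ← ENNReal.ofReal_mul hA1.Q_pos.le]
  exact ENNReal.ofReal_le_ofReal hA1.sum_bound

lemma tsum_a_le (hA1 : Assumption1 a ρ Q M ν ℓ) (u : ℝ) :
    ∑' j : ℕ+, ENNReal.ofReal (a (j : ℕ) u) ≤ ENNReal.ofReal (1 - ν) :=
  le_trans (ENNReal.tsum_le_tsum fun j => ENNReal.ofReal_le_ofReal (a_le_QL hA1 j u))
    (tsum_QL_le hA1)

lemma ofReal_volCoef_le (hA1 : Assumption1 a ρ Q M ν ℓ)
    (hbdd : BddAbove (Set.range (a 0))) (N : ℕ) (t : ℤ) {k : ℕ} (d : Fin k → ℕ+) :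
    ENNReal.ofReal (volCoef a N t d) ≤
      ENNReal.ofReal (sSup (Set.range (a 0))) * ∏ i, ENNReal.ofReal (Q / ℓ (d i : ℕ)) := by
  calc ENNReal.ofReal (volCoef a N t d)
      ≤ ENNReal.ofReal (sSup (Set.range (a 0)) * ∏ i, (Q / ℓ (d i : ℕ))) := by
        refine ENNReal.ofReal_le_ofReal ?_
        refine mul_le_mul (a0_le_sSup hbdd _) ?_
          (Finset.prod_nonneg fun _ _ => hA1.a_nonneg _ _) (sSup_a0_nonneg hA1 hbdd)
        exact Finset.prod_le_prod (fun _ _ => hA1.a_nonneg _ _) (fun i _ => a_le_QL hA1 (d i) _)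
    _ = _ := by
        rw [ENNReal.ofReal_mul (sSup_a0_nonneg hA1 hbdd), ENNReal.ofReal_prod_of_nonneg
          (f := fun i : Fin k => Q / ℓ ((d i : ℕ)))
          (fun i _ => div_nonneg hA1.Q_pos.le (hA1.ℓ_pos _ (d i).one_le).le)]

lemma tsum_volCoef_le (hA1 : Assumption1 a ρ Q M ν ℓ)
    (hbdd : BddAbove (Set.range (a 0))) (N : ℕ) (t : ℤ) (k : ℕ) :
    ∑' d : Fin (k + 1) → ℕ+, ENNReal.ofReal (volCoef a N t d) ≤
      ENNReal.ofReal (sSup (Set.range (a 0))) * ENNReal.ofReal (1 - ν) ^ (k + 1) := by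
  calc ∑' d : Fin (k + 1) → ℕ+, ENNReal.ofReal (volCoef a N t d)
      ≤ ∑' d : Fin (k + 1) → ℕ+, ENNReal.ofReal (sSup (Set.range (a 0)))
          * ∏ i, ENNReal.ofReal (Q / ℓ (d i : ℕ)) :=
        ENNReal.tsum_le_tsum fun d => ofReal_volCoef_le hA1 hbdd N t d
    _ = ENNReal.ofReal (sSup (Set.range (a 0)))
          * (∑' j : ℕ+, ENNReal.ofReal (Q / ℓ (j : ℕ))) ^ (k + 1) := by
        rw [ENNReal.tsum_mul_left, tsum_pi_prod (fun j : ℕ+ => ENNReal.ofReal (Q / ℓ (j : ℕ))) (k+1)]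
    _ ≤ ENNReal.ofReal (sSup (Set.range (a 0))) * ENNReal.ofReal (1 - ν) ^ (k + 1) := by
        exact mul_le_mul_right (pow_le_pow_left' (tsum_QL_le hA1) (k + 1)) _

lemma summable_geo_nu (hA1 : Assumption1 a ρ Q M ν ℓ) :
    Summable (fun k : ℕ => (1 - ν) ^ (k + 1)) := by
  have h : Summable (fun k : ℕ => (1 - ν) ^ k) :=
    summable_geometric_of_lt_one (by linarith [hA1.ν_lt_one]) (by linarith [hA1.ν_pos])
  exact (summable_nat_add_iff 1).mpr h

lemma tsum_ofReal_geo (hA1 : Assumption1 a ρ Q M ν ℓ) :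
    ∑' k : ℕ, ENNReal.ofReal (1 - ν) ^ (k + 1)
      = ENNReal.ofReal (∑' k : ℕ, (1 - ν) ^ (k + 1)) := by
  rw [ENNReal.ofReal_tsum_of_nonneg
    (fun k => pow_nonneg (by linarith [hA1.ν_lt_one]) _) (summable_geo_nu hA1)]
  exact tsum_congr fun k => (ENNReal.ofReal_pow (by linarith [hA1.ν_lt_one]) _).symm

lemma tsum_sigma_volCoef_le (hA1 : Assumption1 a ρ Q M ν ℓ)
    (hbdd : BddAbove (Set.range (a 0))) (N : ℕ) (t : ℤ) :
    ∑' kd : Σ k : ℕ, (Fin (k + 1) → ℕ+), ENNReal.ofReal (volCoef a N t kd.2) ≤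
      ENNReal.ofReal (sSup (Set.range (a 0)) * ∑' k : ℕ, (1 - ν) ^ (k + 1)) := by
  rw [ENNReal.tsum_sigma']
  calc ∑' (k : ℕ) (d : Fin (k + 1) → ℕ+), ENNReal.ofReal (volCoef a N t d)
      ≤ ∑' k : ℕ, ENNReal.ofReal (sSup (Set.range (a 0))) * ENNReal.ofReal (1 - ν) ^ (k + 1) :=
        ENNReal.tsum_le_tsum fun k => tsum_volCoef_le hA1 hbdd N t k
    _ = ENNReal.ofReal (sSup (Set.range (a 0)) * ∑' k : ℕ, (1 - ν) ^ (k + 1)) := by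
        rw [ENNReal.tsum_mul_left, tsum_ofReal_geo hA1,
          ← ENNReal.ofReal_mul (sSup_a0_nonneg hA1 hbdd)]

lemma measurable_Mle_Vt (Z : ℤ → Ωs → ℝ) (N : ℕ) (t : ℤ) :
    Measurable[Mle Z t] (Vt a Z N t) := by
  refine Measurable.fun_add ?_ ?_
  · exact (((measurable_Mle_Z Z le_rfl).pow_const 2).ennreal_ofReal).const_mul _
  · exact Measurable.ennreal_tsum fun kd =>
      ((measurable_Mle_volZprod Z t kd.2).ennreal_ofReal).const_mul _

lemma measurable_Vt (hZ : ∀ t, Measurable (Z t)) (N : ℕ) (t : ℤ) :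
    Measurable (Vt a Z N t) :=
  (measurable_Mle_Vt Z N t).mono (Mle_le_ambient hZ t) le_rfl

set_option maxHeartbeats 1000000 in
lemma lintegral_Vt (hA1 : Assumption1 a ρ Q M ν ℓ) (hZ : IIDNoise Z) (N : ℕ) (t : ℤ) :
    ∫⁻ ω, Vt a Z N t ω ∂ℙ = ENNReal.ofReal (a 0 ((t : ℝ) / N)) +
      ∑' kd : Σ k : ℕ, (Fin (k + 1) → ℕ+), ENNReal.ofReal (volCoef a N t kd.2) := by
  unfold Vt
  rw [lintegral_add_left ((((hZ.meas t).pow_const 2).ennreal_ofReal).const_mul _)]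
  rw [lintegral_const_mul _ (((hZ.meas t).pow_const 2).ennreal_ofReal), lintegral_Zsq hZ t,
    mul_one]
  congr 1
  have hmeas : ∀ kd : Σ k : ℕ, (Fin (k + 1) → ℕ+),
      Measurable (fun ω => ENNReal.ofReal (volZprod Z t kd.2 ω)) := fun kd =>
    ((measurable_Mle_volZprod Z t kd.2).mono (Mle_le_ambient hZ.meas t) le_rfl).ennreal_ofReal
  rw [lintegral_tsum (f := fun (kd : Σ k : ℕ, (Fin (k + 1) → ℕ+)) (ω : Ωs) =>
      ENNReal.ofReal (volCoef a N t kd.2) * ENNReal.ofReal (volZprod Z t kd.2 ω))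
    (fun kd => ((hmeas kd).const_mul (ENNReal.ofReal (volCoef a N t kd.2))).aemeasurable)]
  exact tsum_congr fun kd => by
    rw [lintegral_const_mul _ (hmeas kd), lintegral_volZprod hZ _ t kd.2, mul_one]

lemma lintegral_Vt_le (hA1 : Assumption1 a ρ Q M ν ℓ) (hZ : IIDNoise Z)
    (hbdd : BddAbove (Set.range (a 0))) (N : ℕ) (t : ℤ) :
    ∫⁻ ω, Vt a Z N t ω ∂ℙ ≤
      ENNReal.ofReal (sSup (Set.range (a 0)) * (1 + ∑' k : ℕ, (1 - ν) ^ (k + 1))) := by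
  rw [lintegral_Vt hA1 hZ N t]
  have h1 : ENNReal.ofReal (a 0 ((t : ℝ) / N)) ≤ ENNReal.ofReal (sSup (Set.range (a 0))) :=
    ENNReal.ofReal_le_ofReal (a0_le_sSup hbdd _)
  calc _ ≤ ENNReal.ofReal (sSup (Set.range (a 0))) +
        ENNReal.ofReal (sSup (Set.range (a 0)) * ∑' k : ℕ, (1 - ν) ^ (k + 1)) :=
      add_le_add h1 (tsum_sigma_volCoef_le hA1 hbdd N t)
    _ = _ := by
      rw [← ENNReal.ofReal_add (sSup_a0_nonneg hA1 hbdd) (by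
        exact mul_nonneg (sSup_a0_nonneg hA1 hbdd)
          (tsum_nonneg fun k => pow_nonneg (by linarith [hA1.ν_lt_one]) _))]
      congr 1
      ring

end AuxV
section AuxRepr

variable {Ωs : Type*} [MeasureSpace Ωs] [IsProbabilityMeasure (ℙ : Measure Ωs)]
variable {a : ℕ → ℝ → ℝ} {ρ Q M ν : ℝ} {ℓ : ℕ → ℝ} {Z : ℤ → Ωs → ℝ}

lemma inner_repr (hA1 : Assumption1 a ρ Q M ν ℓ) (N : ℕ) (t : ℤ) (k : ℕ) (ω : Ωs) :
    ∑' d : Fin (k + 1) → ℕ+, volCoef a N t d * volZprod Z t d ω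
      = (∑' d : Fin (k + 1) → ℕ+,
          ENNReal.ofReal (volCoef a N t d) * ENNReal.ofReal (volZprod Z t d ω)).toReal := by
  rw [tsum_eq_toReal_tsum_ofReal (f := fun d : Fin (k + 1) → ℕ+ => volCoef a N t d
    * volZprod Z t d ω)
    (fun d => mul_nonneg (volCoef_nonneg hA1 N t d) (volZprod_nonneg Z t d ω))]
  congr 1
  exact tsum_congr fun d => ENNReal.ofReal_mul (volCoef_nonneg hA1 N t d)

lemma inner_nonneg (hA1 : Assumption1 a ρ Q M ν ℓ) (N : ℕ) (t : ℤ) (k : ℕ) (ω : Ωs) :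
    0 ≤ ∑' d : Fin (k + 1) → ℕ+, volCoef a N t d * volZprod Z t d ω :=
  tsum_nonneg fun d => mul_nonneg (volCoef_nonneg hA1 N t d) (volZprod_nonneg Z t d ω)

lemma volX2_repr (hA1 : Assumption1 a ρ Q M ν ℓ) (N : ℕ) (t : ℤ) (ω : Ωs) :
    volX2 a Z N t ω = a 0 ((t : ℝ) / N) * (Z t ω) ^ 2 +
      (∑' k : ℕ, ENNReal.ofReal (∑' d : Fin (k + 1) → ℕ+,
        volCoef a N t d * volZprod Z t d ω)).toReal := by
  unfold volX2
  congr 1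
  exact tsum_eq_toReal_tsum_ofReal fun k => inner_nonneg hA1 N t k ω

lemma measurable_Mle_volX2 (hA1 : Assumption1 a ρ Q M ν ℓ) (N : ℕ) (t : ℤ) :
    Measurable[Mle Z t] (volX2 a Z N t) := by
  have hrepr : volX2 a Z N t = fun ω => a 0 ((t : ℝ) / N) * (Z t ω) ^ 2 +
      (∑' k : ℕ, ENNReal.ofReal ((∑' d : Fin (k + 1) → ℕ+,
        ENNReal.ofReal (volCoef a N t d) * ENNReal.ofReal (volZprod Z t d ω)).toReal)).toReal := by
    funext ω
    rw [volX2_repr hA1 N t ω]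
    congr 2
    exact tsum_congr fun k => by rw [inner_repr hA1 N t k ω]
  rw [hrepr]
  have hZm : Measurable[Mle Z t] fun ω => a 0 ((t : ℝ) / N) * (Z t ω) ^ 2 :=
    ((measurable_Mle_Z Z le_rfl).pow_const 2).const_mul _
  refine hZm.add (Measurable.ennreal_toReal (Measurable.ennreal_tsum fun k => ?_))
  refine Measurable.ennreal_ofReal (Measurable.ennreal_toReal ?_)
  exact Measurable.ennreal_tsum fun d =>
    ((measurable_Mle_volZprod Z t d).ennreal_ofReal).const_mul _

lemma volX2_nonneg (hA1 : Assumption1 a ρ Q M ν ℓ) (N : ℕ) (t : ℤ) (ω : Ωs) :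
    0 ≤ volX2 a Z N t ω := by
  rw [volX2_repr hA1 N t ω]
  have h1 : 0 ≤ a 0 ((t : ℝ) / N) * (Z t ω) ^ 2 :=
    mul_nonneg (hA1.a_nonneg _ _) (sq_nonneg _)
  positivity

lemma ofReal_volX2_le_Vt (hA1 : Assumption1 a ρ Q M ν ℓ) (N : ℕ) (t : ℤ) (ω : Ωs) :
    ENNReal.ofReal (volX2 a Z N t ω) ≤ Vt a Z N t ω := by
  rw [volX2_repr hA1 N t ω]
  refine le_trans (ENNReal.ofReal_add_le) (add_le_add ?_ ?_)
  · rw [ENNReal.ofReal_mul (hA1.a_nonneg _ _)]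
  · refine le_trans (ENNReal.ofReal_toReal_le) ?_
    rw [ENNReal.tsum_sigma']
    refine ENNReal.tsum_le_tsum fun k => ?_
    rw [inner_repr hA1 N t k ω]
    exact ENNReal.ofReal_toReal_le

lemma volX2_eq_toReal_Vt (hA1 : Assumption1 a ρ Q M ν ℓ) (N : ℕ) (t : ℤ) (ω : Ωs)
    (h : Vt a Z N t ω ≠ ∞) : volX2 a Z N t ω = (Vt a Z N t ω).toReal := by
  have hS : (∑' kd : Σ k : ℕ, (Fin (k + 1) → ℕ+),
      ENNReal.ofReal (volCoef a N t kd.2) * ENNReal.ofReal (volZprod Z t kd.2 ω)) ≠ ∞ := by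
    intro hc
    exact h (by rw [Vt, hc, add_top])
  have hsig : (∑' kd : Σ k : ℕ, (Fin (k + 1) → ℕ+),
      ENNReal.ofReal (volCoef a N t kd.2) * ENNReal.ofReal (volZprod Z t kd.2 ω))
      = ∑' (k : ℕ) (d : Fin (k + 1) → ℕ+),
        ENNReal.ofReal (volCoef a N t d) * ENNReal.ofReal (volZprod Z t d ω) :=
    ENNReal.tsum_sigma' _
  have hTk : ∀ k : ℕ, (∑' d : Fin (k + 1) → ℕ+,
      ENNReal.ofReal (volCoef a N t d) * ENNReal.ofReal (volZprod Z t d ω)) ≠ ∞ := by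
    intro k hc
    apply hS
    rw [hsig]
    refine top_le_iff.mp ?_
    have hle := ENNReal.le_tsum (f := fun k : ℕ => ∑' d : Fin (k + 1) → ℕ+,
      ENNReal.ofReal (volCoef a N t d) * ENNReal.ofReal (volZprod Z t d ω)) k
    rw [hc] at hle
    exact hle
  rw [volX2_repr hA1 N t ω]
  have h2 : (∑' k : ℕ, ENNReal.ofReal (∑' d : Fin (k + 1) → ℕ+,
        volCoef a N t d * volZprod Z t d ω))
      = ∑' (k : ℕ) (d : Fin (k + 1) → ℕ+),
        ENNReal.ofReal (volCoef a N t d) * ENNReal.ofReal (volZprod Z t d ω) :=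
    tsum_congr fun k => by rw [inner_repr hA1 N t k ω, ENNReal.ofReal_toReal (hTk k)]
  rw [h2, ← hsig]
  unfold Vt
  rw [ENNReal.toReal_add (ENNReal.mul_ne_top ENNReal.ofReal_ne_top ENNReal.ofReal_ne_top) hS,
    ENNReal.toReal_mul, ENNReal.toReal_ofReal (hA1.a_nonneg _ _),
    ENNReal.toReal_ofReal (sq_nonneg _)]

end AuxRepr
section AuxRec

variable {Ωs : Type*} [MeasureSpace Ωs] [IsProbabilityMeasure (ℙ : Measure Ωs)]
variable {a : ℕ → ℝ → ℝ} {ρ Q M ν : ℝ} {ℓ : ℕ → ℝ} {Z : ℤ → Ωs → ℝ}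

lemma term_cons (hA1 : Assumption1 a ρ Q M ν ℓ) (N : ℕ) (t : ℤ) (j : ℕ+) {k : ℕ}
    (d : Fin k → ℕ+) (ω : Ωs) :
    ENNReal.ofReal (volCoef a N t (Fin.cons j d)) *
        ENNReal.ofReal (volZprod Z t (Fin.cons j d) ω)
      = ENNReal.ofReal (a (j : ℕ) ((t : ℝ) / N)) * ENNReal.ofReal ((Z t ω) ^ 2) *
        (ENNReal.ofReal (volCoef a N (t - ((j : ℕ) : ℤ)) d) *
          ENNReal.ofReal (volZprod Z (t - ((j : ℕ) : ℤ)) d ω)) := by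
  rw [volCoef_cons, volZprod_cons, ENNReal.ofReal_mul (hA1.a_nonneg _ _),
    ENNReal.ofReal_mul (sq_nonneg _)]
  ring

set_option maxHeartbeats 1000000 in
lemma Vt_rec (hA1 : Assumption1 a ρ Q M ν ℓ) (N : ℕ) (t : ℤ) (ω : Ωs) :
    Vt a Z N t ω = (ENNReal.ofReal (a 0 ((t : ℝ) / N)) +
        ∑' j : ℕ+, ENNReal.ofReal (a (j : ℕ) ((t : ℝ) / N)) * Vt a Z N (t - ((j : ℕ) : ℤ)) ω)
      * ENNReal.ofReal ((Z t ω) ^ 2) := by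
  set Zl : ℤ → ℝ≥0∞ := fun s => ENNReal.ofReal ((Z s ω) ^ 2) with hZl
  set al : ℕ+ → ℝ≥0∞ := fun j => ENNReal.ofReal (a (j : ℕ) ((t : ℝ) / N)) with hal
  -- the series part of `Vt` at time `s`
  set T : ℤ → ℝ≥0∞ := fun s => ∑' kd : Σ k : ℕ, (Fin (k + 1) → ℕ+),
    ENNReal.ofReal (volCoef a N s kd.2) * ENNReal.ofReal (volZprod Z s kd.2 ω) with hT
  have hVt : ∀ s : ℤ, Vt a Z N s ω
      = ENNReal.ofReal (a 0 ((s : ℝ) / N)) * Zl s + T s := fun s => rfl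
  -- level sums
  have hsig : ∀ s : ℤ, T s = ∑' (k : ℕ) (d : Fin (k + 1) → ℕ+),
      ENNReal.ofReal (volCoef a N s d) * ENNReal.ofReal (volZprod Z s d ω) := fun s =>
    ENNReal.tsum_sigma' _
  -- level 0 of `T t`
  have hlev0 : (∑' d : Fin 1 → ℕ+,
        ENNReal.ofReal (volCoef a N t d) * ENNReal.ofReal (volZprod Z t d ω))
      = ∑' j : ℕ+, al j * Zl t *
          (ENNReal.ofReal (a 0 (((t - ((j : ℕ) : ℤ) : ℤ) : ℝ) / N)) * Zl (t - ((j : ℕ) : ℤ))) := by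
    rw [← (Equiv.funUnique (Fin 1) ℕ+).symm.tsum_eq]
    refine tsum_congr fun j => ?_
    have hconst : ((Equiv.funUnique (Fin 1) ℕ+).symm j) = Fin.cons j Fin.elim0 := by
      funext i
      refine Fin.cases rfl (fun i => i.elim0) i
    rw [hconst, term_cons hA1 N t j Fin.elim0 ω, volCoef_zero, volZprod_zero]
  -- levels `k+1` of `T t`
  have hlev : ∀ k : ℕ, (∑' d : Fin (k + 2) → ℕ+,
        ENNReal.ofReal (volCoef a N t d) * ENNReal.ofReal (volZprod Z t d ω))
      = ∑' j : ℕ+, al j * Zl t * (∑' d : Fin (k + 1) → ℕ+,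
          ENNReal.ofReal (volCoef a N (t - ((j : ℕ) : ℤ)) d) *
            ENNReal.ofReal (volZprod Z (t - ((j : ℕ) : ℤ)) d ω)) := by
    intro k
    rw [← (Fin.consEquiv (fun _ : Fin (k + 2) => ℕ+)).tsum_eq]
    rw [ENNReal.tsum_prod']
    refine tsum_congr fun j => ?_
    rw [← ENNReal.tsum_mul_left]
    refine tsum_congr fun d => ?_
    exact term_cons hA1 N t j d ω
  -- recursion for T
  have hTrec : T t = ∑' j : ℕ+, al j * Zl t * Vt a Z N (t - ((j : ℕ) : ℤ)) ω := by
    rw [hsig t, tsum_eq_zero_add' ENNReal.summable, hlev0]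
    simp only [hlev]
    rw [ENNReal.tsum_comm (f := fun (k : ℕ) (j : ℕ+) => al j * Zl t *
      (∑' d : Fin (k + 1) → ℕ+, ENNReal.ofReal (volCoef a N (t - ((j : ℕ) : ℤ)) d) *
        ENNReal.ofReal (volZprod Z (t - ((j : ℕ) : ℤ)) d ω)))]
    rw [← ENNReal.tsum_add]
    refine tsum_congr fun j => ?_
    rw [ENNReal.tsum_mul_left, ← mul_add, hVt (t - ((j : ℕ) : ℤ)), hsig (t - ((j : ℕ) : ℤ))]
  rw [hVt t, hTrec, add_mul, ← ENNReal.tsum_mul_right]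
  congr 1
  refine tsum_congr fun j => ?_
  ring

end AuxRec
section AuxParts

variable {Ωs : Type*} [MeasureSpace Ωs] [IsProbabilityMeasure (ℙ : Measure Ωs)]
variable {a : ℕ → ℝ → ℝ} {ρ Q M ν : ℝ} {ℓ : ℕ → ℝ} {Z : ℤ → Ωs → ℝ}

lemma Vt_ae_lt_top (hA1 : Assumption1 a ρ Q M ν ℓ) (hZ : IIDNoise Z)
    (hbdd : BddAbove (Set.range (a 0))) (N : ℕ) (t : ℤ) :
    ∀ᵐ ω ∂ℙ, Vt a Z N t ω < ∞ :=
  ae_lt_top (measurable_Vt hZ.meas N t)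
    (lt_of_le_of_lt (lintegral_Vt_le hA1 hZ hbdd N t) ENNReal.ofReal_lt_top).ne

lemma part_a (hA1 : Assumption1 a ρ Q M ν ℓ) (hZ : IIDNoise Z)
    (hbdd : BddAbove (Set.range (a 0))) (N : ℕ) (t : ℤ) :
    ∀ᵐ ω ∂ℙ, Summable (fun kd : Σ k : ℕ, (Fin (k + 1) → ℕ+) =>
      volCoef a N t kd.2 * volZprod Z t kd.2 ω) := by
  filter_upwards [Vt_ae_lt_top hA1 hZ hbdd N t] with ω hω
  refine summable_of_tsum_ofReal_ne_top
    (fun kd => mul_nonneg (volCoef_nonneg hA1 N t kd.2) (volZprod_nonneg Z t kd.2 ω)) ?_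
  have h1 : (∑' kd : Σ k : ℕ, (Fin (k + 1) → ℕ+),
      ENNReal.ofReal (volCoef a N t kd.2 * volZprod Z t kd.2 ω))
      = ∑' kd : Σ k : ℕ, (Fin (k + 1) → ℕ+),
        ENNReal.ofReal (volCoef a N t kd.2) * ENNReal.ofReal (volZprod Z t kd.2 ω) :=
    tsum_congr fun kd => ENNReal.ofReal_mul (volCoef_nonneg hA1 N t kd.2)
  rw [h1]
  refine ne_top_of_le_ne_top hω.ne ?_
  exact le_add_self

lemma lintegral_ofReal_volX2_le (hA1 : Assumption1 a ρ Q M ν ℓ) (hZ : IIDNoise Z)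
    (hbdd : BddAbove (Set.range (a 0))) (N : ℕ) (t : ℤ) :
    ∫⁻ ω, ENNReal.ofReal (volX2 a Z N t ω) ∂ℙ ≤
      ENNReal.ofReal (sSup (Set.range (a 0)) * (1 + ∑' k : ℕ, (1 - ν) ^ (k + 1))) :=
  le_trans (lintegral_mono fun ω => ofReal_volX2_le_Vt hA1 N t ω) (lintegral_Vt_le hA1 hZ hbdd N t)

lemma measurable_volX2 (hA1 : Assumption1 a ρ Q M ν ℓ) (hZ : ∀ t, Measurable (Z t))
    (N : ℕ) (t : ℤ) : Measurable (volX2 a Z N t) :=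
  (measurable_Mle_volX2 hA1 N t).mono (Mle_le_ambient hZ t) le_rfl

lemma integrable_volX2 (hA1 : Assumption1 a ρ Q M ν ℓ) (hZ : IIDNoise Z)
    (hbdd : BddAbove (Set.range (a 0))) (N : ℕ) (t : ℤ) :
    Integrable (volX2 a Z N t) ℙ := by
  refine ⟨(measurable_volX2 hA1 hZ.meas N t).aestronglyMeasurable, ?_⟩
  rw [hasFiniteIntegral_iff_ofReal (ae_of_all _ (volX2_nonneg hA1 N t))]
  exact lt_of_le_of_lt (lintegral_ofReal_volX2_le hA1 hZ hbdd N t) ENNReal.ofReal_lt_top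

lemma part_b (hA1 : Assumption1 a ρ Q M ν ℓ) (hZ : IIDNoise Z)
    (hbdd : BddAbove (Set.range (a 0))) (N : ℕ) (t : ℤ) :
    ∫ ω, volX2 a Z N t ω ∂ℙ ≤
      sSup (Set.range (a 0)) * (1 + ∑' k : ℕ, (1 - ν) ^ (k + 1)) := by
  rw [integral_eq_lintegral_of_nonneg_ae (ae_of_all _ (volX2_nonneg hA1 N t))
    (measurable_volX2 hA1 hZ.meas N t).aestronglyMeasurable]
  have hRnn : 0 ≤ sSup (Set.range (a 0)) * (1 + ∑' k : ℕ, (1 - ν) ^ (k + 1)) :=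
    mul_nonneg (sSup_a0_nonneg hA1 hbdd) (by
      have : 0 ≤ ∑' k : ℕ, (1 - ν) ^ (k + 1) :=
        tsum_nonneg fun k => pow_nonneg (by linarith [hA1.ν_lt_one]) _
      linarith)
  calc (∫⁻ ω, ENNReal.ofReal (volX2 a Z N t ω) ∂ℙ).toReal
      ≤ (ENNReal.ofReal (sSup (Set.range (a 0)) * (1 + ∑' k : ℕ, (1 - ν) ^ (k + 1)))).toReal :=
        ENNReal.toReal_mono ENNReal.ofReal_ne_top (lintegral_ofReal_volX2_le hA1 hZ hbdd N t)
    _ = _ := ENNReal.toReal_ofReal hRnn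

lemma part_c_eq (hA1 : Assumption1 a ρ Q M ν ℓ) (hZ : IIDNoise Z)
    (hbdd : BddAbove (Set.range (a 0))) (N : ℕ) (t : ℤ) :
    ∀ᵐ ω ∂ℙ, volX2 a Z N t ω =
      (a 0 ((t : ℝ) / N) + ∑' j : ℕ+, a (j : ℕ) ((t : ℝ) / N)
          * volX2 a Z N (t - ((j : ℕ) : ℤ)) ω) * (Z t ω) ^ 2 := by
  have h1 : ∀ᵐ ω ∂ℙ, ∀ s : ℤ, Vt a Z N s ω < ∞ :=
    (ae_all_iff).mpr fun s => Vt_ae_lt_top hA1 hZ hbdd N s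
  have hmeasS : Measurable (fun ω => ∑' j : ℕ+,
      ENNReal.ofReal (a (j : ℕ) ((t : ℝ) / N)) * Vt a Z N (t - ((j : ℕ) : ℤ)) ω) :=
    Measurable.ennreal_tsum fun j => (measurable_Vt hZ.meas N _).const_mul _
  have h2 : ∀ᵐ ω ∂ℙ, (∑' j : ℕ+,
      ENNReal.ofReal (a (j : ℕ) ((t : ℝ) / N)) * Vt a Z N (t - ((j : ℕ) : ℤ)) ω) < ∞ := by
    refine ae_lt_top hmeasS ?_
    rw [lintegral_tsum fun j => ((measurable_Vt hZ.meas N _).const_mul _).aemeasurable]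
    have hb : ∀ j : ℕ+, ∫⁻ ω, ENNReal.ofReal (a (j : ℕ) ((t : ℝ) / N))
        * Vt a Z N (t - ((j : ℕ) : ℤ)) ω ∂ℙ
        ≤ ENNReal.ofReal (a (j : ℕ) ((t : ℝ) / N))
          * ENNReal.ofReal (sSup (Set.range (a 0)) * (1 + ∑' k : ℕ, (1 - ν) ^ (k + 1))) := by
      intro j
      rw [lintegral_const_mul _ (measurable_Vt hZ.meas N _)]
      exact mul_le_mul_right (lintegral_Vt_le hA1 hZ hbdd N _) _
    refine ne_top_of_le_ne_top ?_ (ENNReal.tsum_le_tsum hb)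
    rw [ENNReal.tsum_mul_right]
    exact ENNReal.mul_ne_top (ne_top_of_le_ne_top ENNReal.ofReal_ne_top (tsum_a_le hA1 _))
      ENNReal.ofReal_ne_top
  filter_upwards [h1, h2] with ω hfin hS
  have hXv : ∀ s : ℤ, volX2 a Z N s ω = (Vt a Z N s ω).toReal := fun s =>
    volX2_eq_toReal_Vt hA1 N s ω (hfin s).ne
  rw [hXv t, Vt_rec hA1 N t ω, ENNReal.toReal_mul]
  congr 1
  · rw [ENNReal.toReal_add ENNReal.ofReal_ne_top hS.ne,
      ENNReal.toReal_ofReal (hA1.a_nonneg _ _)]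
    congr 1
    rw [ENNReal.tsum_toReal_eq
      (fun j => ENNReal.mul_ne_top ENNReal.ofReal_ne_top (hfin _).ne)]
    exact tsum_congr fun j => by
      rw [ENNReal.toReal_mul, ENNReal.toReal_ofReal (hA1.a_nonneg _ _), ← hXv]
  · exact ENNReal.toReal_ofReal (sq_nonneg _)

end AuxParts
section AuxUnique

variable {Ωs : Type*} [MeasureSpace Ωs] [IsProbabilityMeasure (ℙ : Measure Ωs)]
variable {a : ℕ → ℝ → ℝ} {ρ Q M ν : ℝ} {ℓ : ℕ → ℝ} {Z : ℤ → Ωs → ℝ}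

set_option maxHeartbeats 2000000 in
lemma part_d (hA1 : Assumption1 a ρ Q M ν ℓ) (hZ : IIDNoise Z)
    (hbdd : BddAbove (Set.range (a 0))) (N : ℕ) (Y2 : ℤ → Ωs → ℝ)
    (hYmeas : ∀ t : ℤ, Measurable[Mle Z t] (Y2 t))
    (hYnn : ∀ t : ℤ, ∀ᵐ ω ∂ℙ, 0 ≤ Y2 t ω)
    (hYint : ∀ t : ℤ, Integrable (Y2 t) ℙ)
    (hYbdd : ∃ B : ℝ, ∀ t : ℤ, ∫ ω, Y2 t ω ∂ℙ ≤ B)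
    (hYeq : ∀ t : ℤ, ∀ᵐ ω ∂ℙ, Y2 t ω =
      (a 0 ((t : ℝ) / N) + ∑' j : ℕ+, a (j : ℕ) ((t : ℝ) / N)
        * Y2 (t - ((j : ℕ) : ℤ)) ω) * (Z t ω) ^ 2)
    (t : ℤ) : Y2 t =ᵐ[ℙ] volX2 a Z N t := by
  obtain ⟨B, hB⟩ := hYbdd
  have hXmeas : ∀ s : ℤ, Measurable (volX2 a Z N s) := fun s => measurable_volX2 hA1 hZ.meas N s
  have hYmeas' : ∀ s : ℤ, Measurable (Y2 s) := fun s =>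
    (hYmeas s).mono (Mle_le_ambient hZ.meas s) le_rfl
  have hDmeas : ∀ s : ℤ, Measurable (fun ω => |Y2 s ω - volX2 a Z N s ω|) := fun s =>
    measurable_abs.comp ((hYmeas' s).sub (hXmeas s))
  have hDmeasM : ∀ s : ℤ, Measurable[Mle Z s] (fun ω => |Y2 s ω - volX2 a Z N s ω|) := fun s =>
    measurable_abs.comp (Measurable.sub (hYmeas s) (measurable_Mle_volX2 hA1 N s))
  have hDnn : ∀ (s : ℤ) (ω : Ωs), (0:ℝ) ≤ |Y2 s ω - volX2 a Z N s ω| := fun s ω => abs_nonneg _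
  set e : ℤ → ℝ≥0∞ := fun s => ∫⁻ ω, ENNReal.ofReal (|Y2 s ω - volX2 a Z N s ω|) ∂ℙ with he
  set CE : ℝ≥0∞ := ENNReal.ofReal (sSup (Set.range (a 0)) * (1 + ∑' k : ℕ, (1 - ν) ^ (k + 1)))
    with hCE
  have hYlint : ∀ s : ℤ, ∫⁻ ω, ENNReal.ofReal (Y2 s ω) ∂ℙ ≤ ENNReal.ofReal B := fun s => by
    rw [← MeasureTheory.ofReal_integral_eq_lintegral_ofReal (hYint s) (hYnn s)]
    exact ENNReal.ofReal_le_ofReal (hB s)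
  have heK : ∀ s : ℤ, e s ≤ ENNReal.ofReal B + CE := by
    intro s
    have hptw : ∀ᵐ ω ∂ℙ, ENNReal.ofReal (|Y2 s ω - volX2 a Z N s ω|)
        ≤ ENNReal.ofReal (Y2 s ω) + ENNReal.ofReal (volX2 a Z N s ω) := by
      filter_upwards [hYnn s] with ω hY
      refine le_trans (ENNReal.ofReal_le_ofReal ?_) ENNReal.ofReal_add_le
      calc |Y2 s ω - volX2 a Z N s ω| ≤ |Y2 s ω| + |volX2 a Z N s ω| := abs_sub _ _
        _ = Y2 s ω + volX2 a Z N s ω := by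
            rw [abs_of_nonneg hY, abs_of_nonneg (volX2_nonneg hA1 N s ω)]
    calc e s ≤ ∫⁻ ω, (ENNReal.ofReal (Y2 s ω) + ENNReal.ofReal (volX2 a Z N s ω)) ∂ℙ :=
        lintegral_mono_ae hptw
      _ = (∫⁻ ω, ENNReal.ofReal (Y2 s ω) ∂ℙ) + ∫⁻ ω, ENNReal.ofReal (volX2 a Z N s ω) ∂ℙ :=
        lintegral_add_left ((hYmeas' s).ennreal_ofReal) _
      _ ≤ ENNReal.ofReal B + CE := add_le_add (hYlint s) (lintegral_ofReal_volX2_le hA1 hZ hbdd N s)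
  set sstar : ℝ≥0∞ := ⨆ s : ℤ, e s with hsstar
  have hsne : sstar ≠ ∞ := ne_top_of_le_ne_top
    (ENNReal.add_ne_top.mpr ⟨ENNReal.ofReal_ne_top, ENNReal.ofReal_ne_top⟩) (iSup_le heK)
  have hkey : ∀ s : ℤ, e s ≤ ENNReal.ofReal (1 - ν) * sstar := by
    intro s
    have hVfin : ∀ᵐ ω ∂ℙ, ∀ r : ℤ, Vt a Z N r ω < ∞ :=
      (ae_all_iff).mpr fun r => Vt_ae_lt_top hA1 hZ hbdd N r
    have hSX : ∀ᵐ ω ∂ℙ, (∑' j : ℕ+,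
        ENNReal.ofReal (a (j : ℕ) ((s : ℝ) / N)) * Vt a Z N (s - ((j : ℕ) : ℤ)) ω) < ∞ := by
      refine ae_lt_top (Measurable.ennreal_tsum fun j =>
        (measurable_Vt hZ.meas N _).const_mul _) ?_
      rw [lintegral_tsum fun j => ((measurable_Vt hZ.meas N _).const_mul _).aemeasurable]
      have hb : ∀ j : ℕ+, ∫⁻ ω, ENNReal.ofReal (a (j : ℕ) ((s : ℝ) / N))
          * Vt a Z N (s - ((j : ℕ) : ℤ)) ω ∂ℙ
          ≤ ENNReal.ofReal (a (j : ℕ) ((s : ℝ) / N)) * CE := fun j => by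
        rw [lintegral_const_mul _ (measurable_Vt hZ.meas N _)]
        exact mul_le_mul_right (lintegral_Vt_le hA1 hZ hbdd N _) _
      refine ne_top_of_le_ne_top ?_ (ENNReal.tsum_le_tsum hb)
      rw [ENNReal.tsum_mul_right]
      exact ENNReal.mul_ne_top (ne_top_of_le_ne_top ENNReal.ofReal_ne_top (tsum_a_le hA1 _))
        ENNReal.ofReal_ne_top
    have hSYfin : ∀ᵐ ω ∂ℙ, (∑' j : ℕ+,
        ENNReal.ofReal (a (j : ℕ) ((s : ℝ) / N))
          * ENNReal.ofReal (Y2 (s - ((j : ℕ) : ℤ)) ω)) < ∞ := by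
      refine ae_lt_top (Measurable.ennreal_tsum fun j =>
        ((hYmeas' _).ennreal_ofReal).const_mul _) ?_
      rw [lintegral_tsum fun j => (((hYmeas' _).ennreal_ofReal).const_mul _).aemeasurable]
      have hb : ∀ j : ℕ+, ∫⁻ ω, ENNReal.ofReal (a (j : ℕ) ((s : ℝ) / N))
          * ENNReal.ofReal (Y2 (s - ((j : ℕ) : ℤ)) ω) ∂ℙ
          ≤ ENNReal.ofReal (a (j : ℕ) ((s : ℝ) / N)) * ENNReal.ofReal B := fun j => by
        rw [lintegral_const_mul _ ((hYmeas' _).ennreal_ofReal)]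
        exact mul_le_mul_right (hYlint _) _
      refine ne_top_of_le_ne_top ?_ (ENNReal.tsum_le_tsum hb)
      rw [ENNReal.tsum_mul_right]
      exact ENNReal.mul_ne_top (ne_top_of_le_ne_top ENNReal.ofReal_ne_top (tsum_a_le hA1 _))
        ENNReal.ofReal_ne_top
    have hYnn_all : ∀ᵐ ω ∂ℙ, ∀ r : ℤ, 0 ≤ Y2 r ω := (ae_all_iff).mpr hYnn
    have hdom : ∀ᵐ ω ∂ℙ, |Y2 s ω - volX2 a Z N s ω| ≤
        (∑' j : ℕ+, a (j : ℕ) ((s : ℝ) / N) * |Y2 (s - ((j : ℕ) : ℤ)) ω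
          - volX2 a Z N (s - ((j : ℕ) : ℤ)) ω|) * (Z s ω) ^ 2 := by
      filter_upwards [hYeq s, part_c_eq hA1 hZ hbdd N s, hYnn_all, hVfin, hSX, hSYfin]
        with ω hYe hXe hYnnω hVf hSXω hSYω
      have hsumX : Summable (fun j : ℕ+ => a (j : ℕ) ((s : ℝ) / N)
          * volX2 a Z N (s - ((j : ℕ) : ℤ)) ω) := by
        refine summable_of_tsum_ofReal_ne_top
          (fun j => mul_nonneg (hA1.a_nonneg _ _) (volX2_nonneg hA1 N _ ω)) ?_
        refine ne_top_of_le_ne_top hSXω.ne (ENNReal.tsum_le_tsum fun j => ?_)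
        rw [ENNReal.ofReal_mul (hA1.a_nonneg _ _)]
        exact mul_le_mul_right (ofReal_volX2_le_Vt hA1 N _ ω) _
      have hsumY : Summable (fun j : ℕ+ => a (j : ℕ) ((s : ℝ) / N)
          * Y2 (s - ((j : ℕ) : ℤ)) ω) := by
        refine summable_of_tsum_ofReal_ne_top
          (fun j => mul_nonneg (hA1.a_nonneg _ _) (hYnnω _)) ?_
        refine ne_top_of_le_ne_top hSYω.ne ?_
        refine le_of_eq (tsum_congr fun j => ?_)
        rw [ENNReal.ofReal_mul (hA1.a_nonneg _ _)]
      have hsub : Y2 s ω - volX2 a Z N s ω = (∑' j : ℕ+, a (j : ℕ) ((s : ℝ) / N)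
          * (Y2 (s - ((j : ℕ) : ℤ)) ω - volX2 a Z N (s - ((j : ℕ) : ℤ)) ω)) * (Z s ω) ^ 2 := by
        rw [hYe, hXe, ← sub_mul]
        congr 1
        have h0 : (a 0 ((s : ℝ) / N) + ∑' j : ℕ+, a (j : ℕ) ((s : ℝ) / N)
              * Y2 (s - ((j : ℕ) : ℤ)) ω)
            - (a 0 ((s : ℝ) / N) + ∑' j : ℕ+, a (j : ℕ) ((s : ℝ) / N)
              * volX2 a Z N (s - ((j : ℕ) : ℤ)) ω)
            = (∑' j : ℕ+, a (j : ℕ) ((s : ℝ) / N) * Y2 (s - ((j : ℕ) : ℤ)) ω)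
              - ∑' j : ℕ+, a (j : ℕ) ((s : ℝ) / N) * volX2 a Z N (s - ((j : ℕ) : ℤ)) ω := by
          ring
        rw [h0, ← Summable.tsum_sub hsumY hsumX]
        exact tsum_congr fun j => by ring
      have hsumD : Summable (fun j : ℕ+ => a (j : ℕ) ((s : ℝ) / N)
          * |Y2 (s - ((j : ℕ) : ℤ)) ω - volX2 a Z N (s - ((j : ℕ) : ℤ)) ω|) := by
        refine Summable.of_nonneg_of_le
          (fun j => mul_nonneg (hA1.a_nonneg _ _) (abs_nonneg _)) (fun j => ?_)
          (hsumY.add hsumX)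
        have habs : |Y2 (s - ((j : ℕ) : ℤ)) ω - volX2 a Z N (s - ((j : ℕ) : ℤ)) ω|
            ≤ Y2 (s - ((j : ℕ) : ℤ)) ω + volX2 a Z N (s - ((j : ℕ) : ℤ)) ω := by
          refine le_trans (abs_sub _ _) ?_
          rw [abs_of_nonneg (hYnnω _), abs_of_nonneg (volX2_nonneg hA1 N _ ω)]
        calc a (j : ℕ) ((s : ℝ) / N)
              * |Y2 (s - ((j : ℕ) : ℤ)) ω - volX2 a Z N (s - ((j : ℕ) : ℤ)) ω|
            ≤ a (j : ℕ) ((s : ℝ) / N) * (Y2 (s - ((j : ℕ) : ℤ)) ω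
              + volX2 a Z N (s - ((j : ℕ) : ℤ)) ω) :=
            mul_le_mul_of_nonneg_left habs (hA1.a_nonneg _ _)
          _ = _ := by ring
      have hterm : ∀ j : ℕ+, ‖a (j : ℕ) ((s : ℝ) / N)
            * (Y2 (s - ((j : ℕ) : ℤ)) ω - volX2 a Z N (s - ((j : ℕ) : ℤ)) ω)‖
          = a (j : ℕ) ((s : ℝ) / N)
            * |Y2 (s - ((j : ℕ) : ℤ)) ω - volX2 a Z N (s - ((j : ℕ) : ℤ)) ω| := fun j => by
        rw [Real.norm_eq_abs, abs_mul, abs_of_nonneg (hA1.a_nonneg _ _)]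
      rw [hsub, abs_mul, abs_of_nonneg (sq_nonneg (Z s ω))]
      refine mul_le_mul_of_nonneg_right ?_ (sq_nonneg _)
      calc |∑' j : ℕ+, a (j : ℕ) ((s : ℝ) / N)
            * (Y2 (s - ((j : ℕ) : ℤ)) ω - volX2 a Z N (s - ((j : ℕ) : ℤ)) ω)|
          = ‖∑' j : ℕ+, a (j : ℕ) ((s : ℝ) / N)
            * (Y2 (s - ((j : ℕ) : ℤ)) ω - volX2 a Z N (s - ((j : ℕ) : ℤ)) ω)‖ :=
          (Real.norm_eq_abs _).symm
        _ ≤ ∑' j : ℕ+, ‖a (j : ℕ) ((s : ℝ) / N)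
            * (Y2 (s - ((j : ℕ) : ℤ)) ω - volX2 a Z N (s - ((j : ℕ) : ℤ)) ω)‖ :=
          norm_tsum_le_tsum_norm (hsumD.congr fun j => (hterm j).symm)
        _ = _ := tsum_congr hterm
    -- pass to lintegrals
    have hofg : ∀ ω : Ωs, ENNReal.ofReal (∑' j : ℕ+, a (j : ℕ) ((s : ℝ) / N)
          * |Y2 (s - ((j : ℕ) : ℤ)) ω - volX2 a Z N (s - ((j : ℕ) : ℤ)) ω|)
        ≤ ∑' j : ℕ+, ENNReal.ofReal (a (j : ℕ) ((s : ℝ) / N))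
          * ENNReal.ofReal (|Y2 (s - ((j : ℕ) : ℤ)) ω
            - volX2 a Z N (s - ((j : ℕ) : ℤ)) ω|) := by
      intro ω
      rw [tsum_eq_toReal_tsum_ofReal (fun j => mul_nonneg (hA1.a_nonneg _ _) (abs_nonneg _))]
      refine le_trans ENNReal.ofReal_toReal_le (ENNReal.tsum_le_tsum fun j => ?_)
      rw [ENNReal.ofReal_mul (hA1.a_nonneg _ _)]
    have hGmeasM : Measurable[Mle Z (s - 1)] (fun ω => ∑' j : ℕ+,
        ENNReal.ofReal (a (j : ℕ) ((s : ℝ) / N)) * ENNReal.ofReal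
          (|Y2 (s - ((j : ℕ) : ℤ)) ω - volX2 a Z N (s - ((j : ℕ) : ℤ)) ω|)) := by
      refine Measurable.ennreal_tsum fun j => Measurable.const_mul ?_ _
      refine Measurable.ennreal_ofReal ?_
      refine (hDmeasM _).mono (Mle_mono Z ?_) le_rfl
      have : (1 : ℤ) ≤ ((j : ℕ) : ℤ) := by exact_mod_cast j.one_le
      omega
    have hGmeas : Measurable (fun ω => ∑' j : ℕ+,
        ENNReal.ofReal (a (j : ℕ) ((s : ℝ) / N)) * ENNReal.ofReal
          (|Y2 (s - ((j : ℕ) : ℤ)) ω - volX2 a Z N (s - ((j : ℕ) : ℤ)) ω|)) :=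
      hGmeasM.mono (Mle_le_ambient hZ.meas _) le_rfl
    have hZlmeas : Measurable (fun ω => ENNReal.ofReal ((Z s ω) ^ 2)) :=
      ((hZ.meas s).pow_const 2).ennreal_ofReal
    have hind : IndepFun (fun ω => ∑' j : ℕ+,
        ENNReal.ofReal (a (j : ℕ) ((s : ℝ) / N)) * ENNReal.ofReal
          (|Y2 (s - ((j : ℕ) : ℤ)) ω - volX2 a Z N (s - ((j : ℕ) : ℤ)) ω|))
        (fun ω => ENNReal.ofReal ((Z s ω) ^ 2)) ℙ := by
      refine indepFun_of_Mle hZ (show s - 1 < s by omega) hGmeasM ?_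
      exact Measurable.ennreal_ofReal
        (Measurable.pow_const (measurable_iff_comap_le.mpr le_rfl) 2)
    have hmul := lintegral_mul_eq_lintegral_mul_lintegral_of_indepFun hGmeas hZlmeas hind
    simp only [Pi.mul_apply] at hmul
    have hGint : ∫⁻ ω, (∑' j : ℕ+,
        ENNReal.ofReal (a (j : ℕ) ((s : ℝ) / N)) * ENNReal.ofReal
          (|Y2 (s - ((j : ℕ) : ℤ)) ω - volX2 a Z N (s - ((j : ℕ) : ℤ)) ω|)) ∂ℙ
        ≤ ENNReal.ofReal (1 - ν) * sstar := by
      rw [lintegral_tsum fun j => (((hDmeas _).ennreal_ofReal).const_mul _).aemeasurable]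
      calc ∑' j : ℕ+, ∫⁻ ω, ENNReal.ofReal (a (j : ℕ) ((s : ℝ) / N))
            * ENNReal.ofReal (|Y2 (s - ((j : ℕ) : ℤ)) ω
              - volX2 a Z N (s - ((j : ℕ) : ℤ)) ω|) ∂ℙ
          = ∑' j : ℕ+, ENNReal.ofReal (a (j : ℕ) ((s : ℝ) / N)) * e (s - ((j : ℕ) : ℤ)) :=
          tsum_congr fun j => lintegral_const_mul _ ((hDmeas _).ennreal_ofReal)
        _ ≤ ∑' j : ℕ+, ENNReal.ofReal (a (j : ℕ) ((s : ℝ) / N)) * sstar :=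
          ENNReal.tsum_le_tsum fun j => mul_le_mul_right (le_iSup e _) _
        _ = (∑' j : ℕ+, ENNReal.ofReal (a (j : ℕ) ((s : ℝ) / N))) * sstar :=
          ENNReal.tsum_mul_right
        _ ≤ ENNReal.ofReal (1 - ν) * sstar := mul_le_mul_left (tsum_a_le hA1 _) _
    calc e s ≤ ∫⁻ ω, (∑' j : ℕ+,
          ENNReal.ofReal (a (j : ℕ) ((s : ℝ) / N)) * ENNReal.ofReal
            (|Y2 (s - ((j : ℕ) : ℤ)) ω - volX2 a Z N (s - ((j : ℕ) : ℤ)) ω|))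
          * ENNReal.ofReal ((Z s ω) ^ 2) ∂ℙ := by
              refine lintegral_mono_ae ?_
              filter_upwards [hdom] with ω hω
              calc ENNReal.ofReal (|Y2 s ω - volX2 a Z N s ω|)
                  ≤ ENNReal.ofReal ((∑' j : ℕ+, a (j : ℕ) ((s : ℝ) / N)
                      * |Y2 (s - ((j : ℕ) : ℤ)) ω - volX2 a Z N (s - ((j : ℕ) : ℤ)) ω|)
                      * (Z s ω) ^ 2) := ENNReal.ofReal_le_ofReal hω
                _ = ENNReal.ofReal (∑' j : ℕ+, a (j : ℕ) ((s : ℝ) / N)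
                      * |Y2 (s - ((j : ℕ) : ℤ)) ω - volX2 a Z N (s - ((j : ℕ) : ℤ)) ω|)
                      * ENNReal.ofReal ((Z s ω) ^ 2) :=
                  ENNReal.ofReal_mul (tsum_nonneg fun j =>
                    mul_nonneg (hA1.a_nonneg _ _) (abs_nonneg _))
                _ ≤ _ := mul_le_mul_left (hofg ω) _
      _ = _ * ∫⁻ ω, ENNReal.ofReal ((Z s ω) ^ 2) ∂ℙ := hmul
      _ ≤ ENNReal.ofReal (1 - ν) * sstar := by
        rw [lintegral_Zsq hZ s, mul_one]
        exact hGint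
  -- conclude sstar = 0
  have hs0 : sstar = 0 := by
    have h1 : sstar ≤ ENNReal.ofReal (1 - ν) * sstar := iSup_le hkey
    have hy := ENNReal.toReal_mono (ENNReal.mul_ne_top ENNReal.ofReal_ne_top hsne) h1
    rw [ENNReal.toReal_mul, ENNReal.toReal_ofReal (by linarith [hA1.ν_lt_one] : (0:ℝ) ≤ 1 - ν)]
      at hy
    have hynn : 0 ≤ sstar.toReal := ENNReal.toReal_nonneg
    have hzero : sstar.toReal = 0 := by nlinarith [hA1.ν_pos]
    rcases (ENNReal.toReal_eq_zero_iff _).mp hzero with h | h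
    · exact h
    · exact absurd h hsne
  have het : e t = 0 := le_antisymm (le_trans (le_iSup e t) hs0.le) zero_le
  have hae : ∀ᵐ ω ∂ℙ, ENNReal.ofReal (|Y2 t ω - volX2 a Z N t ω|) = 0 :=
    (lintegral_eq_zero_iff ((hDmeas t).ennreal_ofReal)).mp het
  filter_upwards [hae] with ω hω
  have h2 : |Y2 t ω - volX2 a Z N t ω| = 0 :=
    le_antisymm (by rwa [ENNReal.ofReal_eq_zero] at hω) (abs_nonneg _)
  have := abs_eq_zero.mp h2
  linarith [this]

end AuxUnique

/-- under Assumption 1, the time-varying Volterra series converges almost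
surely for every `t` and `N`, its expectation is bounded by
`sup_u a_0(u)·[1 + Σ_{k≥1}(1−ν)^k]` uniformly in `t` and `N`, it is a causal solution of
the tvARCH(∞) equations, and it is a.s. the unique causal solution among all causal
solutions with uniformly bounded means. Causality of a process is expressed as
measurability with respect to `σ(Z_t, Z_{t−1}, …)`. -/
theorem stmt_0 {Ωs : Type*} [MeasureSpace Ωs] [IsProbabilityMeasure (ℙ : Measure Ωs)]
    (a : ℕ → ℝ → ℝ) (ρ Q M ν : ℝ) (ℓ : ℕ → ℝ) (Z : ℤ → Ωs → ℝ)
    (hA1 : Assumption1 a ρ Q M ν ℓ) (hZ : IIDNoise Z)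
    (hbdd : BddAbove (Set.range (a 0))) :
    -- (a) the Volterra series converges almost surely
    (∀ N : ℕ, 1 ≤ N → ∀ t : ℤ, ∀ᵐ ω ∂ℙ,
      Summable (fun kd : Σ k : ℕ, (Fin (k + 1) → ℕ+) =>
        volCoef a N t kd.2 * volZprod Z t kd.2 ω)) ∧
    -- (b) uniform bound on the expectation
    (∀ N : ℕ, 1 ≤ N → ∀ t : ℤ,
      ∫ ω, volX2 a Z N t ω ∂ℙ ≤
        sSup (Set.range (a 0)) * (1 + ∑' k : ℕ, (1 - ν) ^ (k + 1))) ∧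
    -- (c) it is a causal solution of the tvARCH(∞) equations
    (∀ N : ℕ, 1 ≤ N → ∀ t : ℤ,
      (∀ᵐ ω ∂ℙ, volX2 a Z N t ω =
        (a 0 ((t : ℝ) / N) +
          ∑' j : ℕ+, a (j : ℕ) ((t : ℝ) / N) * volX2 a Z N (t - (j : ℕ)) ω) * (Z t ω) ^ 2) ∧
      Measurable[⨆ s : {s : ℤ // s ≤ t}, MeasurableSpace.comap (Z (s : ℤ)) inferInstance]
        (volX2 a Z N t)) ∧
    -- (d) uniqueness in the set of all causal solutions (with uniformly bounded means)
    (∀ N : ℕ, 1 ≤ N → ∀ Y2 : ℤ → Ωs → ℝ,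
      (∀ t : ℤ, Measurable[⨆ s : {s : ℤ // s ≤ t},
          MeasurableSpace.comap (Z (s : ℤ)) inferInstance] (Y2 t)) →
      (∀ t : ℤ, ∀ᵐ ω ∂ℙ, 0 ≤ Y2 t ω) →
      (∀ t : ℤ, Integrable (Y2 t) ℙ) →
      (∃ B : ℝ, ∀ t : ℤ, ∫ ω, Y2 t ω ∂ℙ ≤ B) →
      (∀ t : ℤ, ∀ᵐ ω ∂ℙ, Y2 t ω =
        (a 0 ((t : ℝ) / N) +
          ∑' j : ℕ+, a (j : ℕ) ((t : ℝ) / N) * Y2 (t - (j : ℕ)) ω) * (Z t ω) ^ 2) →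
      ∀ t : ℤ, Y2 t =ᵐ[ℙ] volX2 a Z N t) := by
  refine ⟨fun N _ t => part_a hA1 hZ hbdd N t, fun N _ t => part_b hA1 hZ hbdd N t,
    fun N _ t => ⟨part_c_eq hA1 hZ hbdd N t, measurable_Mle_volX2 hA1 N t⟩,
    fun N _ Y2 hm hnn hint hb heq t => part_d hA1 hZ hbdd N Y2 hm hnn hint hb heq t⟩


end
end

section
/- Let ℓ : ℕ₊ → (0,∞), Q > 0 and 0 < ν < 1 satisfy Q Σ_{j≥1} 1/ℓ(j) ≤ 1−ν and L := Σ_{j≥1} j/ℓ(j) < ∞. Then for every t ∈ ℤ, Σ_{k=1}^∞ Σ_{j_k<⋯<j_1<j_0=t} k Q^{k−1} (j_0 − j_k) / Π_{i=1}^k ℓ(j_{i−1}−j_i) ≤ L Σ_{k=1}^∞ k² (1−ν)^{k−1} < ∞. -/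
open MeasureTheory ProbabilityTheory Filter Set
open scoped ENNReal NNReal Topology

noncomputable section

lemma tsum_pi_prod_ennreal : ∀ {n : ℕ} (h : Fin n → ℕ+ → ℝ≥0∞),
    ∑' d : Fin n → ℕ+, ∏ j, h j (d j) = ∏ j, ∑' x : ℕ+, h j x := by
  intro n
  induction n with
  | zero =>
    intro h
    rw [tsum_eq_single (fun i => i.elim0)
      (fun b hb => absurd (funext fun i => i.elim0) hb)]
    simp
  | succ n ih =>
    intro h
    rw [← (Fin.consEquiv (fun _ : Fin (n+1) => ℕ+)).tsum_eq]
    have hval : ∀ p : ℕ+ × (Fin n → ℕ+),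
        ∏ j, h j ((Fin.consEquiv (fun _ : Fin (n+1) => ℕ+)) p j)
          = h 0 p.1 * ∏ j : Fin n, h j.succ (p.2 j) := by
      intro p
      rw [Fin.prod_univ_succ]
      simp [Fin.consEquiv]
    calc ∑' p : ℕ+ × (Fin n → ℕ+), ∏ j, h j ((Fin.consEquiv (fun _ : Fin (n+1) => ℕ+)) p j)
        = ∑' p : ℕ+ × (Fin n → ℕ+), h 0 p.1 * ∏ j : Fin n, h j.succ (p.2 j) :=
          tsum_congr hval
      _ = ∑' x : ℕ+, ∑' d : Fin n → ℕ+, h 0 x * ∏ j : Fin n, h j.succ (d j) :=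
          ENNReal.tsum_prod'
      _ = (∑' x : ℕ+, h 0 x) * ∑' d : Fin n → ℕ+, ∏ j : Fin n, h j.succ (d j) := by
          simp_rw [ENNReal.tsum_mul_left, ENNReal.tsum_mul_right]
      _ = ∏ j, ∑' x : ℕ+, h j x := by
          rw [ih, Fin.prod_univ_succ]

/-- under `Q Σ 1/ℓ(j) ≤ 1−ν` and `L = Σ j/ℓ(j) < ∞`, for every `t`,
`Σ_{k=1}^∞ Σ_{j_k<⋯<j_0=t} k Q^{k−1} (j_0−j_k)/Π ℓ(j_{i−1}−j_i) ≤ L Σ_k k²(1−ν)^{k−1} < ∞`.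
The inner sum over decreasing tuples is parametrized by the gaps `d : Fin k → ℕ₊`, the
outer index `k ≥ 1` is written as `k+1` with `k : ℕ`, and `j_0 − j_k = Σ_i d_i`. -/
theorem stmt_3 (ℓ : ℕ+ → ℝ) (Q ν : ℝ) (hQ : 0 < Q) (hν0 : 0 < ν) (hν1 : ν < 1)
    (hℓ : ∀ j : ℕ+, 0 < ℓ j) (hsum : Summable fun j : ℕ+ => 1 / ℓ j)
    (hbound : Q * (∑' j : ℕ+, 1 / ℓ j) ≤ 1 - ν)
    (hL : Summable fun j : ℕ+ => ((j : ℕ) : ℝ) / ℓ j) :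
    ∀ _t : ℤ,
      Summable (fun kd : Σ k : ℕ, (Fin (k + 1) → ℕ+) =>
        ((kd.1 : ℝ) + 1) * Q ^ kd.1 * (∑ i, ((kd.2 i : ℕ) : ℝ)) / ∏ i, ℓ (kd.2 i)) ∧
      (∑' k : ℕ, ∑' d : Fin (k + 1) → ℕ+,
          ((k : ℝ) + 1) * Q ^ k * (∑ i, ((d i : ℕ) : ℝ)) / ∏ i, ℓ (d i))
        ≤ (∑' j : ℕ+, ((j : ℕ) : ℝ) / ℓ j) * ∑' k : ℕ, ((k : ℝ) + 1) ^ 2 * (1 - ν) ^ k ∧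
      Summable (fun k : ℕ => ((k : ℝ) + 1) ^ 2 * (1 - ν) ^ k) := by
  intro _t
  have hν : (0:ℝ) ≤ 1 - ν := by linarith
  -- summability of the geometric-type series
  have hr : ‖(1 - ν : ℝ)‖ < 1 := by
    rw [Real.norm_eq_abs, abs_of_nonneg hν]; linarith
  have h0 := summable_pow_mul_geometric_of_norm_lt_one (R := ℝ) 0 hr
  have h1 := summable_pow_mul_geometric_of_norm_lt_one (R := ℝ) 1 hr
  have h2 := summable_pow_mul_geometric_of_norm_lt_one (R := ℝ) 2 hr
  have hsumB : Summable (fun k : ℕ => ((k : ℝ) + 1) ^ 2 * (1 - ν) ^ k) :=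
    ((h2.add (h1.mul_left 2)).add h0).congr (fun k => by push_cast; ring)
  set S : ℝ := ∑' j : ℕ+, 1 / ℓ j with hSdef
  set L : ℝ := ∑' j : ℕ+, ((j : ℕ) : ℝ) / ℓ j with hLdef
  set B : ℝ := ∑' k : ℕ, ((k : ℝ) + 1) ^ 2 * (1 - ν) ^ k with hBdef
  have hLnn : 0 ≤ L := tsum_nonneg fun j => div_nonneg (by positivity) (hℓ j).le
  have hBnn : 0 ≤ B := tsum_nonneg fun k =>
    mul_nonneg (sq_nonneg _) (pow_nonneg hν _)
  set S' : ℝ≥0∞ := ENNReal.ofReal S with hS'def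
  set L' : ℝ≥0∞ := ENNReal.ofReal L with hL'def
  have hS' : ∑' j : ℕ+, ENNReal.ofReal (1 / ℓ j) = S' :=
    (ENNReal.ofReal_tsum_of_nonneg (fun j => div_nonneg zero_le_one (hℓ j).le) hsum).symm
  have hL' : ∑' j : ℕ+, ENNReal.ofReal (((j : ℕ) : ℝ) / ℓ j) = L' :=
    (ENNReal.ofReal_tsum_of_nonneg
      (fun j => div_nonneg (by positivity) (hℓ j).le) hL).symm
  set F : (Σ k : ℕ, (Fin (k + 1) → ℕ+)) → ℝ := fun kd =>
    ((kd.1 : ℝ) + 1) * Q ^ kd.1 * (∑ i, ((kd.2 i : ℕ) : ℝ)) / ∏ i, ℓ (kd.2 i)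
    with hFdef
  have hprodpos : ∀ {k : ℕ} (d : Fin (k + 1) → ℕ+), (0:ℝ) < ∏ i, ℓ (d i) :=
    fun d => Finset.prod_pos fun i _ => hℓ _
  have hFnn : ∀ kd, 0 ≤ F kd := by
    rintro ⟨k, d⟩
    refine div_nonneg ?_ (hprodpos d).le
    refine mul_nonneg (mul_nonneg (by positivity) (pow_nonneg hQ.le _)) ?_
    exact Finset.sum_nonneg fun i _ => by positivity
  -- the key exact computation of the inner sum, in ℝ≥0∞
  have key : ∀ k : ℕ, ∑' d : Fin (k+1) → ℕ+, ENNReal.ofReal (F ⟨k, d⟩)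
      = ((k + 1 : ℕ) : ℝ≥0∞)
        * (ENNReal.ofReal (((k:ℝ) + 1) * Q ^ k) * (L' * S' ^ k)) := by
    intro k
    have step1 : ∀ d : Fin (k+1) → ℕ+, ENNReal.ofReal (F ⟨k, d⟩)
        = ∑ i : Fin (k+1), ENNReal.ofReal (((k:ℝ) + 1) * Q ^ k) *
            ∏ j : Fin (k+1), (if j = i then ENNReal.ofReal (((d j : ℕ) : ℝ) / ℓ (d j))
              else ENNReal.ofReal (1 / ℓ (d j))) := by
      intro d
      have hre : F ⟨k, d⟩ = ∑ i : Fin (k+1), (((k:ℝ) + 1) * Q ^ k) *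
          ∏ j : Fin (k+1), (if j = i then ((d j : ℕ) : ℝ) / ℓ (d j)
            else 1 / ℓ (d j)) := by
        have hsplit : ∀ i : Fin (k+1),
            ∏ j : Fin (k+1), (if j = i then ((d j : ℕ) : ℝ) / ℓ (d j) else 1 / ℓ (d j))
              = ((d i : ℕ) : ℝ) / ∏ j, ℓ (d j) := by
          intro i
          have : ∀ j : Fin (k+1),
              (if j = i then ((d j : ℕ) : ℝ) / ℓ (d j) else 1 / ℓ (d j))
                = (if j = i then ((d j : ℕ) : ℝ) else 1) / ℓ (d j) := by
            intro j; split_ifs <;> rfl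
          rw [Finset.prod_congr rfl (fun j _ => this j), Finset.prod_div_distrib,
            Finset.prod_ite_eq' Finset.univ i (fun j => ((d j : ℕ) : ℝ)),
            if_pos (Finset.mem_univ i)]
        simp_rw [hsplit, hFdef]
        rw [← Finset.mul_sum, ← Finset.sum_div, mul_div_assoc]
      rw [hre, ENNReal.ofReal_sum_of_nonneg]
      · refine Finset.sum_congr rfl fun i _ => ?_
        rw [ENNReal.ofReal_mul (by positivity), ENNReal.ofReal_prod_of_nonneg]
        · congr 1
          refine Finset.prod_congr rfl fun j _ => ?_
          split_ifs <;> rfl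
        · intro j _
          split_ifs
          · exact div_nonneg (by positivity) (hℓ _).le
          · exact div_nonneg zero_le_one (hℓ _).le
      · intro i _
        refine mul_nonneg (by positivity) (Finset.prod_nonneg fun j _ => ?_)
        split_ifs
        · exact div_nonneg (by positivity) (hℓ _).le
        · exact div_nonneg zero_le_one (hℓ _).le
    have hinner : ∀ i j : Fin (k+1),
        (∑' x : ℕ+, if j = i then ENNReal.ofReal (((x : ℕ) : ℝ) / ℓ x)
          else ENNReal.ofReal (1 / ℓ x)) = if j = i then L' else S' := by
      intro i j
      by_cases h : j = i
      · simp only [if_pos h]; exact hL'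
      · simp only [if_neg h]; exact hS'
    have hprodif : ∀ i : Fin (k+1),
        (∏ j : Fin (k+1), if j = i then L' else S') = L' * S' ^ k := by
      intro i
      rw [← Finset.mul_prod_erase Finset.univ _ (Finset.mem_univ i), if_pos rfl]
      congr 1
      rw [Finset.prod_congr rfl (fun j hj => if_neg (Finset.ne_of_mem_erase hj)),
        Finset.prod_const, Finset.card_erase_of_mem (Finset.mem_univ i),
        Finset.card_univ, Fintype.card_fin]
      simp
    calc ∑' d : Fin (k+1) → ℕ+, ENNReal.ofReal (F ⟨k, d⟩)
        = ∑' d : Fin (k+1) → ℕ+, ∑ i : Fin (k+1),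
            ENNReal.ofReal (((k:ℝ) + 1) * Q ^ k) *
            ∏ j : Fin (k+1), (if j = i then ENNReal.ofReal (((d j : ℕ) : ℝ) / ℓ (d j))
              else ENNReal.ofReal (1 / ℓ (d j))) := tsum_congr step1
      _ = ∑ i : Fin (k+1), ∑' d : Fin (k+1) → ℕ+,
            ENNReal.ofReal (((k:ℝ) + 1) * Q ^ k) *
            ∏ j : Fin (k+1), (if j = i then ENNReal.ofReal (((d j : ℕ) : ℝ) / ℓ (d j))
              else ENNReal.ofReal (1 / ℓ (d j))) :=
          Summable.tsum_finsetSum (fun i _ => ENNReal.summable)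
      _ = ∑ i : Fin (k+1), ENNReal.ofReal (((k:ℝ) + 1) * Q ^ k) *
            ∏ j : Fin (k+1), ∑' x : ℕ+, (if j = i then ENNReal.ofReal (((x : ℕ) : ℝ) / ℓ x)
              else ENNReal.ofReal (1 / ℓ x)) := by
          refine Finset.sum_congr rfl fun i _ => ?_
          rw [ENNReal.tsum_mul_left,
            tsum_pi_prod_ennreal (fun j x => if j = i then ENNReal.ofReal (((x : ℕ) : ℝ) / ℓ x)
              else ENNReal.ofReal (1 / ℓ x))]
      _ = ∑ i : Fin (k+1), ENNReal.ofReal (((k:ℝ) + 1) * Q ^ k) * (L' * S' ^ k) := by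
          refine Finset.sum_congr rfl fun i _ => ?_
          rw [Finset.prod_congr rfl (fun j _ => hinner i j), hprodif i]
      _ = ((k + 1 : ℕ) : ℝ≥0∞)
          * (ENNReal.ofReal (((k:ℝ) + 1) * Q ^ k) * (L' * S' ^ k)) := by
          rw [Finset.sum_const, Finset.card_univ, Fintype.card_fin, nsmul_eq_mul]
  -- the per-k bound
  have hQS : ENNReal.ofReal Q * S' ≤ ENNReal.ofReal (1 - ν) := by
    rw [hS'def, ← ENNReal.ofReal_mul hQ.le]
    exact ENNReal.ofReal_le_ofReal hbound
  have hAk : ∀ k : ℕ, ((k + 1 : ℕ) : ℝ≥0∞)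
      * (ENNReal.ofReal (((k:ℝ) + 1) * Q ^ k) * (L' * S' ^ k))
      ≤ L' * ENNReal.ofReal (((k : ℝ) + 1) ^ 2 * (1 - ν) ^ k) := by
    intro k
    have h1 : ((k + 1 : ℕ) : ℝ≥0∞) = ENNReal.ofReal ((k:ℝ) + 1) := by
      rw [← ENNReal.ofReal_natCast (k + 1)]
      congr 1
      push_cast; ring
    calc ((k + 1 : ℕ) : ℝ≥0∞)
        * (ENNReal.ofReal (((k:ℝ) + 1) * Q ^ k) * (L' * S' ^ k))
        = ENNReal.ofReal ((k:ℝ) + 1) ^ 2 * L' * (ENNReal.ofReal Q * S') ^ k := by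
          rw [h1, ENNReal.ofReal_mul (by positivity), ENNReal.ofReal_pow hQ.le, mul_pow]
          ring
      _ ≤ ENNReal.ofReal ((k:ℝ) + 1) ^ 2 * L' * ENNReal.ofReal (1 - ν) ^ k := by
          gcongr
      _ = L' * ENNReal.ofReal (((k : ℝ) + 1) ^ 2 * (1 - ν) ^ k) := by
          rw [ENNReal.ofReal_mul (by positivity), ENNReal.ofReal_pow (by positivity),
            ENNReal.ofReal_pow hν]
          ring
  set T : ℝ≥0∞ := ∑' kd : Σ k : ℕ, (Fin (k + 1) → ℕ+), ENNReal.ofReal (F kd)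
    with hTdef
  have hT : T = ∑' k : ℕ, ∑' d : Fin (k+1) → ℕ+, ENNReal.ofReal (F ⟨k, d⟩) :=
    ENNReal.tsum_sigma' _
  have hTle : T ≤ L' * ENNReal.ofReal B := by
    rw [hT]
    calc ∑' k : ℕ, ∑' d : Fin (k+1) → ℕ+, ENNReal.ofReal (F ⟨k, d⟩)
        ≤ ∑' k : ℕ, L' * ENNReal.ofReal (((k : ℝ) + 1) ^ 2 * (1 - ν) ^ k) :=
          ENNReal.tsum_le_tsum (fun k => (key k) ▸ hAk k)
      _ = L' * ∑' k : ℕ, ENNReal.ofReal (((k : ℝ) + 1) ^ 2 * (1 - ν) ^ k) :=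
          ENNReal.tsum_mul_left
      _ = L' * ENNReal.ofReal B := by
          rw [← ENNReal.ofReal_tsum_of_nonneg
            (fun k => mul_nonneg (sq_nonneg _) (pow_nonneg hν _)) hsumB]
  have hTne : T ≠ ⊤ :=
    ne_top_of_le_ne_top (ENNReal.mul_ne_top ENNReal.ofReal_ne_top ENNReal.ofReal_ne_top)
      hTle
  have hFsummable : Summable F := by
    have h := ENNReal.summable_toReal hTne
    exact h.congr fun kd => ENNReal.toReal_ofReal (hFnn kd)
  have hTreal : T = ENNReal.ofReal (∑' kd, F kd) := by
    rw [hTdef]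
    exact (ENNReal.ofReal_tsum_of_nonneg hFnn hFsummable).symm
  refine ⟨hFsummable, ?_, hsumB⟩
  have hiter : (∑' k : ℕ, ∑' d : Fin (k+1) → ℕ+, F ⟨k, d⟩) = ∑' kd, F kd :=
    (Summable.tsum_sigma' (fun k => hFsummable.sigma_factor k) hFsummable).symm
  have htr : (∑' kd, F kd) = T.toReal := by
    rw [hTreal, ENNReal.toReal_ofReal (tsum_nonneg hFnn)]
  have hfinal : T.toReal ≤ L * B := by
    have h := ENNReal.toReal_mono
      (ENNReal.mul_ne_top ENNReal.ofReal_ne_top ENNReal.ofReal_ne_top) hTle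
    rw [ENNReal.toReal_mul] at h
    rwa [ENNReal.toReal_ofReal hLnn, ENNReal.toReal_ofReal hBnn] at h
  calc (∑' k : ℕ, ∑' d : Fin (k+1) → ℕ+, F ⟨k, d⟩) = T.toReal := by rw [hiter, htr]
    _ ≤ L * B := hfinal

end
end
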